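/- arXiv:2305.15361 — 14 statements merged into one kernel-verified Lean document; each statement's English description precedes it below -/
import Mathlib

section
/- Let α and β be irrational numbers with 1 < α < β and 1/α + 1/β = 1. Then for every positive integer n, ⌊nβ⌋ − ⌊nα⌋ = ⌊n(β/α − 1)⌋ + ⌊n(1 − α/β)⌋ + 1. -/
lemma ceil_irr (x : ℝ) (hx : Irrational x) : ⌈x⌉ = ⌊x⌋ + 1 := by
  rcases (Int.floor_le x).lt_or_eq with h | h
  · refine Int.ceil_eq_iff.2 ?_
    push_cast
    exact ⟨by simpa using h, (Int.lt_floor_add_one x).le⟩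
  · exact absurd h.symm (hx.ne_int _)

theorem beatty_difference_decomposition
    (α β : ℝ) (hαirr : Irrational α) (hβirr : Irrational β)
    (hα : 1 < α) (hαβ : α < β) (hsum : 1 / α + 1 / β = 1) :
    ∀ n : ℕ, 0 < n →
      ⌊(n : ℝ) * β⌋ - ⌊(n : ℝ) * α⌋ =
        ⌊(n : ℝ) * (β / α - 1)⌋ + ⌊(n : ℝ) * (1 - α / β)⌋ + 1 := by
  intro n hn
  have hα0 : α ≠ 0 := by linarith
  have hβ0 : β ≠ 0 := by linarith
  have h1 : β / α = β - 1 := by field_simp at hsum ⊢; linarith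
  have h2 : α / β = α - 1 := by field_simp at hsum ⊢; linarith
  have hnα : Irrational ((n : ℝ) * α) := hαirr.natCast_mul hn.ne'
  have e1 : (n : ℝ) * (β / α - 1) = (n : ℝ) * β + (-(2 * n) : ℤ) := by
    rw [h1]; push_cast; ring
  have e2 : (n : ℝ) * (1 - α / β) = -((n : ℝ) * α) + ((2 * n : ℤ) : ℝ) := by
    rw [h2]; push_cast; ring
  rw [e1, e2, Int.floor_add_intCast, Int.floor_add_intCast, Int.floor_neg,
    ceil_irr _ hnα]
  ring
end

section
/- Let α be irrational with 1 < α < 2 and let β satisfy 1/α + 1/β = 1. Set a_n = ⌊nα⌋, b_n = ⌊nβ⌋, and let B = {⌊mβ⌋ : m ≥ 1}. Then for every positive integer n, the number of integers m ∈ B with a_n < m < b_n equals ⌊(2 − α)n⌋. -/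
theorem count_B_between_eq_floor
    (α β : ℝ) (hαirr : Irrational α)
    (hα1 : 1 < α) (hα2 : α < 2) (hsum : 1 / α + 1 / β = 1) :
    ∀ n : ℕ, 0 < n →
      ({m : ℤ | (∃ k : ℕ, 0 < k ∧ m = ⌊(k : ℝ) * β⌋) ∧
          ⌊(n : ℝ) * α⌋ < m ∧ m < ⌊(n : ℝ) * β⌋}.ncard : ℤ) =
        ⌊(2 - α) * (n : ℝ)⌋ := by
  intro n hn
  have hα0 : (0:ℝ) < α := by linarith
  have hαne : α ≠ 0 := ne_of_gt hα0
  have h1α : 1/α < 1 := by rw [div_lt_one hα0]; exact hα1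
  have h1α0 : 0 < 1/α := by positivity
  have h1β : 1/β = 1 - 1/α := by linarith
  have h1β0 : 0 < 1/β := by rw [h1β]; linarith
  have hβ0 : 0 < β := by
    by_contra h
    push_neg at h
    have : 1/β ≤ 0 := one_div_nonpos.mpr h
    linarith
  have hβne : β ≠ 0 := ne_of_gt hβ0
  have hβval : β * (α - 1) = α := by
    field_simp at hsum
    nlinarith [hsum]
  have hβ2 : 2 < β := by nlinarith
  set L : ℤ := ⌊(n : ℝ) * α⌋ with hL
  have hnα_irr : Irrational ((n : ℝ) * α) := hαirr.natCast_mul hn.ne'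
  have hlt1 : (L : ℝ) < (n : ℝ) * α := by
    rcases lt_or_eq_of_le (Int.floor_le ((n:ℝ)*α)) with h | h
    · exact h
    · exact absurd h.symm (hnα_irr.ne_int L)
  have hlt2 : (n : ℝ) * α < (L : ℝ) + 1 := Int.lt_floor_add_one _
  have hn0 : (0:ℝ) < n := by exact_mod_cast hn
  have hLn : (n : ℤ) ≤ L := Int.le_floor.mpr (by push_cast; nlinarith)
  have hL2n : L ≤ 2 * n - 1 := by
    have : L < 2 * n := Int.floor_lt.mpr (by push_cast; nlinarith)
    omega
  -- strict monotonicity of k ↦ ⌊kβ⌋ on ℤ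
  have hmono : ∀ j k : ℤ, j < k → ⌊(j:ℝ)*β⌋ < ⌊(k:ℝ)*β⌋ := by
    intro j k hjk
    have h1 : (j:ℝ)*β + 1 ≤ (k:ℝ)*β := by
      have : (j:ℝ) + 1 ≤ k := by exact_mod_cast hjk
      nlinarith
    calc ⌊(j:ℝ)*β⌋ < ⌊(j:ℝ)*β⌋ + 1 := by omega
      _ = ⌊(j:ℝ)*β + 1⌋ := by rw [Int.floor_add_one]
      _ ≤ ⌊(k:ℝ)*β⌋ := Int.floor_le_floor h1
  -- describe the set as an image of an interval
  have hset : {m : ℤ | (∃ k : ℕ, 0 < k ∧ m = ⌊(k : ℝ) * β⌋) ∧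
      L < m ∧ m < ⌊(n : ℝ) * β⌋} =
      ↑((Finset.Icc (L - n + 1) ((n:ℤ) - 1)).image fun k : ℤ => ⌊(k:ℝ)*β⌋) := by
    ext m
    simp only [Set.mem_setOf_eq, Finset.coe_image, Set.mem_image, Finset.mem_coe,
      Finset.mem_Icc]
    constructor
    · rintro ⟨⟨k, hk0, rfl⟩, hmL, hmn⟩
      refine ⟨(k:ℤ), ⟨?_, ?_⟩, by norm_cast⟩
      · -- k ≥ L - n + 1
        by_contra h
        push_neg at h
        have hkLn : (k:ℤ) ≤ L - n := by omega
        have hkr : (k:ℝ) ≤ (L:ℝ) - n := by exact_mod_cast hkLn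
        have h2 : ((L:ℝ) - n) * β < (n:ℝ) * α := by nlinarith
        have h3 : (k:ℝ) * β ≤ ((L:ℝ) - n) * β := by nlinarith
        have h4 : (L:ℝ) + 1 ≤ (k:ℝ) * β := by
          have : (L:ℤ) + 1 ≤ ⌊(k:ℝ)*β⌋ := by omega
          calc (L:ℝ) + 1 = ((L + 1 : ℤ) : ℝ) := by push_cast; ring
            _ ≤ (k:ℝ) * β := by
                exact le_trans (by exact_mod_cast this) (Int.floor_le _)
        linarith
      · -- k ≤ n - 1
        by_contra h
        push_neg at h
        have hk : (n:ℝ) ≤ (k:ℝ) := by exact_mod_cast (by omega : (n:ℤ) ≤ (k:ℤ))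
        have := Int.floor_le_floor (mul_le_mul_of_nonneg_right hk (le_of_lt hβ0))
        omega
    · rintro ⟨k, ⟨hk1, hk2⟩, rfl⟩
      have hk0 : 1 ≤ k := by omega
      refine ⟨⟨k.toNat, by omega, by
        rw [show ((k.toNat:ℕ):ℝ) = (k:ℝ) from by
          exact_mod_cast congrArg (Int.cast : ℤ → ℝ) (Int.toNat_of_nonneg (by omega))]⟩, ?_, ?_⟩
      · -- L < ⌊kβ⌋, using kβ ≥ (L-n+1)β > L+1
        have hkr : (L:ℝ) - n + 1 ≤ (k:ℝ) := by exact_mod_cast hk1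
        have key : (L:ℝ) + 1 < ((L:ℝ) - n + 1) * β := by nlinarith
        have : (L:ℝ) + 1 ≤ (k:ℝ) * β := by nlinarith
        have := Int.le_floor.mpr (show ((L + 1 : ℤ) : ℝ) ≤ (k:ℝ)*β by push_cast; linarith)
        omega
      · exact hmono k n (by omega)
  rw [hset, Set.ncard_coe_finset]
  rw [Finset.card_image_of_injOn]
  · rw [Int.card_Icc]
    have h1 : (0:ℤ) ≤ (n:ℤ) - 1 + 1 - (L - n + 1) := by omega
    rw [Int.toNat_of_nonneg h1]
    -- RHS: ⌊(2-α)n⌋ = 2n - L - 1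
    have hceil : ⌈(n:ℝ) * α⌉ = L + 1 := by
      refine le_antisymm (Int.ceil_le.mpr (by push_cast; linarith)) ?_
      have : L < ⌈(n:ℝ) * α⌉ := Int.lt_ceil.mpr hlt1
      omega
    have : (2 - α) * (n:ℝ) = ((2 * (n:ℤ) : ℤ) : ℝ) + (-((n:ℝ) * α)) := by
      push_cast; ring
    rw [this, Int.floor_intCast_add, Int.floor_neg, hceil]
    omega
  · intro a ha b hb hab
    simp only [Finset.coe_Icc, Set.mem_Icc] at ha hb
    by_contra hne
    rcases lt_or_gt_of_ne hne with h | h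
    · exact absurd hab (ne_of_lt (hmono a b h))
    · exact absurd hab (ne_of_gt (hmono b a h))
end

section
/- Let α be irrational with 1 < α < 2 and let β satisfy 1/α + 1/β = 1. Set a_n = ⌊nα⌋, b_n = ⌊nβ⌋, and let A = {⌊mα⌋ : m ≥ 1}. Then for every positive integer n, the number of integers m ∈ A with a_n < m < b_n equals ⌊((2 − α)/(α − 1))·n⌋. -/
theorem count_A_between_eq_floor
    (α β : ℝ) (hαirr : Irrational α)
    (hα1 : 1 < α) (hα2 : α < 2) (hsum : 1 / α + 1 / β = 1) :
    ∀ n : ℕ, 0 < n →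
      ({m : ℤ | (∃ k : ℕ, 0 < k ∧ m = ⌊(k : ℝ) * α⌋) ∧
          ⌊(n : ℝ) * α⌋ < m ∧ m < ⌊(n : ℝ) * β⌋}.ncard : ℤ) =
        ⌊((2 - α) / (α - 1)) * (n : ℝ)⌋ := by
  intro n hn
  have hα0 : (0:ℝ) < α := by linarith
  have hαm1 : (0:ℝ) < α - 1 := by linarith
  have hβ : β = α / (α - 1) := by
    have hβ0 : β ≠ 0 := by
      intro h
      rw [h] at hsum
      simp at hsum
      have : 1 / α < 1 := by rw [div_lt_one hα0]; exact hα1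
      linarith
    field_simp at hsum
    field_simp
    linarith
  have hβpos : (0:ℝ) < β := hβ ▸ div_pos hα0 hαm1
  have ham1irr : Irrational (α - 1) := by simpa using hαirr.sub_intCast 1
  have hβirr : Irrational β := by
    have h3 : Irrational (1 + (α - 1)⁻¹) := by
      simpa using (ham1irr.inv).intCast_add 1
    have : β = 1 + (α - 1)⁻¹ := by rw [hβ]; field_simp; ring
    rw [this]; exact h3
  have hn1 : (1:ℝ) ≤ (n:ℝ) := by exact_mod_cast hn
  set N : ℤ := ⌊(n : ℝ) * β⌋ with hN
  set K : ℤ := ⌊(n : ℝ) / (α - 1)⌋ with hK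
  -- Beatty disjointness: no j ≥ 1 with ⌊jα⌋ = N
  have L1 : ∀ j : ℤ, 1 ≤ j → ⌊(j:ℝ) * α⌋ ≠ N := by
    intro j hj heq
    have hjα : Irrational ((j:ℝ) * α) := hαirr.intCast_mul (by omega)
    have hnβ : Irrational ((n:ℝ) * β) := hβirr.natCast_mul hn.ne'
    have h1 : (N:ℝ) < (j:ℝ) * α := by
      have := Int.floor_le ((j:ℝ) * α)
      rw [heq] at this
      exact lt_of_le_of_ne this (Ne.symm (hjα.ne_int N))
    have h2 : (j:ℝ) * α < N + 1 := by
      have := Int.lt_floor_add_one ((j:ℝ) * α)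
      rw [heq] at this; exact_mod_cast this
    have h3 : (N:ℝ) < (n:ℝ) * β :=
      lt_of_le_of_ne (Int.floor_le _) (Ne.symm (hnβ.ne_int N))
    have h4 : (n:ℝ) * β < N + 1 := Int.lt_floor_add_one _
    have e1 : (N:ℝ)/α + (N:ℝ)/β = N := by
      have h : (N:ℝ)/α + (N:ℝ)/β = N * (1/α + 1/β) := by ring
      rw [h, hsum, mul_one]
    have e2 : ((N:ℝ)+1)/α + ((N:ℝ)+1)/β = (N:ℝ)+1 := by
      have h : ((N:ℝ)+1)/α + ((N:ℝ)+1)/β = ((N:ℝ)+1) * (1/α + 1/β) := by ring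
      rw [h, hsum, mul_one]
    have f1 : (N:ℝ)/α < j := (div_lt_iff₀ hα0).2 (by linarith)
    have f2 : (j:ℝ) < ((N:ℝ)+1)/α := (lt_div_iff₀ hα0).2 (by linarith)
    have f3 : (N:ℝ)/β < n := (div_lt_iff₀ hβpos).2 (by linarith)
    have f4 : (n:ℝ) < ((N:ℝ)+1)/β := (lt_div_iff₀ hβpos).2 (by linarith)
    have g1 : (N:ℝ) < (j:ℝ) + n := by linarith
    have g2 : (j:ℝ) + n < (N:ℝ) + 1 := by linarith
    have g1' : N < j + (n:ℤ) := by exact_mod_cast g1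
    have g2' : j + (n:ℤ) < N + 1 := by exact_mod_cast g2
    omega
  -- strict monotonicity of k ↦ ⌊kα⌋
  have hmono : ∀ j k : ℤ, 0 ≤ j → j < k → ⌊(j:ℝ) * α⌋ < ⌊(k:ℝ) * α⌋ := by
    intro j k hj hjk
    have hjk' : (j:ℝ) + 1 ≤ k := by exact_mod_cast hjk
    have h : ((j:ℝ) + 1) * α ≤ (k:ℝ) * α :=
      mul_le_mul_of_nonneg_right hjk' hα0.le
    have hf := Int.floor_le ((j:ℝ) * α)
    have : ((⌊(j:ℝ) * α⌋ + 1 : ℤ) : ℝ) ≤ (k:ℝ) * α := by push_cast; nlinarith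
    have := Int.le_floor.2 this
    omega
  have hirrq : Irrational ((n:ℝ) / (α - 1)) := by
    rw [div_eq_mul_inv]
    exact (ham1irr.inv).natCast_mul hn.ne'
  have hnβeq : (n:ℝ) * β = (n:ℝ) * α / (α - 1) := by rw [hβ]; ring
  -- the set is the image of (n, K] under k ↦ ⌊kα⌋
  have hS : {m : ℤ | (∃ k : ℕ, 0 < k ∧ m = ⌊(k : ℝ) * α⌋) ∧
          ⌊(n : ℝ) * α⌋ < m ∧ m < ⌊(n : ℝ) * β⌋}
      = ↑((Finset.Ioc (n:ℤ) K).image (fun k : ℤ => ⌊(k:ℝ) * α⌋)) := by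
    ext m
    simp only [Set.mem_setOf_eq, Finset.coe_image, Set.mem_image, Finset.mem_coe,
      Finset.mem_Ioc]
    constructor
    · rintro ⟨⟨k, hk0, rfl⟩, h1, h2⟩
      refine ⟨(k:ℤ), ⟨?_, ?_⟩, by push_cast; ring_nf⟩
      · by_contra hc
        push_neg at hc
        have hkn : (k:ℝ) ≤ (n:ℝ) := by exact_mod_cast hc
        have : ⌊(k:ℝ) * α⌋ ≤ ⌊(n:ℝ) * α⌋ :=
          Int.floor_le_floor (mul_le_mul_of_nonneg_right hkn hα0.le)
        omega
      · -- k ≤ K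
        have hlt : (k:ℝ) * α < N := by
          have h2' : ⌊(k:ℝ) * α⌋ + 1 ≤ N := h2
          have := Int.lt_floor_add_one ((k:ℝ) * α)
          have hc : ((⌊(k:ℝ) * α⌋ + 1 : ℤ) : ℝ) ≤ (N:ℝ) := by exact_mod_cast h2'
          push_cast at hc
          linarith
        have hNle : (N:ℝ) ≤ (n:ℝ) * β := Int.floor_le _
        have hkb : (k:ℝ) * α < (n:ℝ) * α / (α - 1) := by rw [← hnβeq]; linarith
        have hkq : (k:ℝ) < (n:ℝ) / (α - 1) := by
          rw [lt_div_iff₀ hαm1]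
          have hc : (n:ℝ) * α / (α - 1) * (α - 1) = (n:ℝ) * α :=
            div_mul_cancel₀ _ hαm1.ne'
          nlinarith [mul_lt_mul_of_pos_right hkb hαm1]
        exact Int.le_floor.2 (by push_cast; linarith)
    · rintro ⟨k, ⟨hk1, hk2⟩, rfl⟩
      have hk0 : (1:ℤ) ≤ k := by
        have : (1:ℤ) ≤ (n:ℤ) := by exact_mod_cast hn
        omega
      have hkR : ((k.toNat : ℕ) : ℝ) = (k:ℝ) := by
        have := Int.toNat_of_nonneg (by omega : (0:ℤ) ≤ k)
        exact_mod_cast congrArg (fun z : ℤ => (z:ℝ)) this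
      refine ⟨⟨k.toNat, by omega, by rw [hkR]⟩, ?_, ?_⟩
      · have := hmono (n:ℤ) k (by positivity) hk1
        simpa using this
      · -- ⌊kα⌋ < N
        have hle : (k:ℝ) ≤ (n:ℝ) / (α - 1) := Int.le_floor.1 hk2
        have hne : (k:ℝ) ≠ (n:ℝ) / (α - 1) := fun h => hirrq.ne_int k h.symm
        have hlt : (k:ℝ) < (n:ℝ) / (α - 1) := lt_of_le_of_ne hle hne
        have hmul : (k:ℝ) * α < (n:ℝ) * β := by
          rw [hnβeq]
          rw [lt_div_iff₀ hαm1]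
          have := mul_lt_mul_of_pos_right ((lt_div_iff₀ hαm1).1 hlt) hα0
          nlinarith [this]
        have hlt2 : (k:ℝ) * α < ((N + 1 : ℤ) : ℝ) := by
          have := Int.lt_floor_add_one ((n:ℝ) * β)
          push_cast
          linarith
        have h5 : ⌊(k:ℝ) * α⌋ < N + 1 := Int.floor_lt.2 hlt2
        have h6 := L1 k hk0
        omega
  rw [hS, Set.ncard_coe_finset]
  have hinj : Set.InjOn (fun k : ℤ => ⌊(k:ℝ) * α⌋) ↑(Finset.Ioc (n:ℤ) K) := by
    intro a ha b hb hab
    simp only [Finset.coe_Ioc, Set.mem_Ioc] at ha hb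
    have ha0 : (0:ℤ) ≤ a := by
      have : (0:ℤ) ≤ (n:ℤ) := by positivity
      omega
    have hb0 : (0:ℤ) ≤ b := by
      have : (0:ℤ) ≤ (n:ℤ) := by positivity
      omega
    rcases lt_trichotomy a b with h | h | h
    · exact absurd hab (by have := hmono a b ha0 h; simp only; omega)
    · exact h
    · exact absurd hab (by have := hmono b a hb0 h; simp only; omega)
  rw [Finset.card_image_of_injOn hinj, Int.card_Ioc]
  have hKn : (n:ℤ) ≤ K := by
    apply Int.le_floor.2
    push_cast
    rw [le_div_iff₀ hαm1]
    nlinarith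
  have htn : ((K - (n:ℤ)).toNat : ℤ) = K - (n:ℤ) := Int.toNat_of_nonneg (by omega)
  rw [htn]
  have harg : ((2 - α) / (α - 1)) * (n : ℝ) = (n:ℝ) / (α - 1) - (n:ℕ) := by
    field_simp
    ring
  rw [harg, Int.floor_sub_natCast]
end

section
/- Let α be irrational with 1 < α < 2 and let β satisfy 1/α + 1/β = 1. Set a_n = ⌊nα⌋ and b_n = ⌊nβ⌋ for n ≥ 1, with b_0 = 0. Then for every positive integer n, ⌊(b_{n−1} + 1)/β⌋ − ⌊a_n/β⌋ = ⌊(2 − α)n⌋. -/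
theorem floor_quotient_identity_beta
    (α β : ℝ) (hαirr : Irrational α)
    (hα1 : 1 < α) (hα2 : α < 2) (hsum : 1 / α + 1 / β = 1) :
    ∀ n : ℕ, 0 < n →
      ⌊((⌊((n : ℝ) - 1) * β⌋ : ℝ) + 1) / β⌋ - ⌊(⌊(n : ℝ) * α⌋ : ℝ) / β⌋ =
        ⌊(2 - α) * (n : ℝ)⌋ := by
  intro n hn
  have hα0 : (0:ℝ) < α := by linarith
  have hαne : α ≠ 0 := ne_of_gt hα0
  have haux : (α - 1)/α = 1 - 1/α := by field_simp
  have h1β : 1/β = (α - 1)/α := by rw [haux]; linarith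
  have hβpos : (0:ℝ) < β := by
    have hp : 0 < 1/β := by
      rw [h1β]; exact div_pos (by linarith) hα0
    exact one_div_pos.mp hp
  have hβ1 : (1:ℝ) < β := by
    have : 1/β < 1 := by rw [h1β, div_lt_one hα0]; linarith
    exact (div_lt_one hβpos).mp this
  set m := ⌊(n:ℝ)*α⌋ with hm
  have hm_le : (m:ℝ) ≤ n*α := Int.floor_le _
  have hm_lt : (n:ℝ)*α < m + 1 := Int.lt_floor_add_one _
  have hirr : Irrational ((n:ℝ)*α) := by
    have := hαirr.natCast_mul hn.ne'
    simpa using this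
  have hm_strict : (m:ℝ) < n*α := lt_of_le_of_ne hm_le (fun h => hirr.ne_int m h.symm)
  have hn1 : (1:ℝ) ≤ (n:ℝ) := by exact_mod_cast hn
  have hA : ⌊((⌊((n:ℝ) - 1)*β⌋ : ℝ) + 1)/β⌋ = (n:ℤ) - 1 := by
    rw [Int.floor_eq_iff]
    constructor
    · rw [le_div_iff₀ hβpos]
      have := Int.lt_floor_add_one (((n:ℝ) - 1)*β)
      push_cast
      linarith
    · rw [div_lt_iff₀ hβpos]
      have := Int.floor_le (((n:ℝ) - 1)*β)
      push_cast
      nlinarith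
  have hB : ⌊(m:ℝ)/β⌋ = m - n := by
    have hdiv : (m:ℝ)/β = (m:ℝ)*(α - 1)/α := by
      rw [div_eq_mul_one_div, h1β, mul_div_assoc]
    rw [hdiv, Int.floor_eq_iff]
    constructor
    · rw [le_div_iff₀ hα0]
      push_cast
      nlinarith
    · rw [div_lt_iff₀ hα0]
      push_cast
      nlinarith
  have hR : ⌊(2 - α)*(n:ℝ)⌋ = 2*n - m - 1 := by
    rw [Int.floor_eq_iff]
    push_cast
    constructor
    · nlinarith
    · nlinarith
  rw [hA, hB, hR]
  ring
end

section
/- Let α be irrational with 1 < α < 2 and let β satisfy 1/α + 1/β = 1. Set a_n = ⌊nα⌋ and b_n = ⌊nβ⌋ for n ≥ 1. Then for every positive integer n, ⌊b_n/α⌋ − ⌊(a_n + 1)/α⌋ = ⌊((2 − α)/(α − 1))·n⌋. -/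
theorem floor_quotient_identity_alpha
    (α β : ℝ) (hαirr : Irrational α)
    (hα1 : 1 < α) (hα2 : α < 2) (hsum : 1 / α + 1 / β = 1) :
    ∀ n : ℕ, 0 < n →
      ⌊(⌊(n : ℝ) * β⌋ : ℝ) / α⌋ - ⌊((⌊(n : ℝ) * α⌋ : ℝ) + 1) / α⌋ =
        ⌊((2 - α) / (α - 1)) * (n : ℝ)⌋ := by
  intro n hn
  have hα0 : (0:ℝ) < α := lt_trans one_pos hα1
  have hαm1 : (0:ℝ) < α - 1 := by linarith
  have hβinv : 1 / β = (α - 1) / α := by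
    have : 1 / β = 1 - 1 / α := by linarith
    rw [this]; field_simp
  have hβ0 : 0 < β := by
    have h1 : 0 < 1 / β := by rw [hβinv]; positivity
    exact one_div_pos.mp h1
  have hβ : β = α / (α - 1) := by
    have hβne : β ≠ 0 := ne_of_gt hβ0
    have hαne : α ≠ 0 := ne_of_gt hα0
    have hαm1ne : α - 1 ≠ 0 := ne_of_gt hαm1
    field_simp at hβinv
    field_simp
    linarith [hβinv]
  have hβ2 : 2 < β := by
    rw [hβ, lt_div_iff₀ hαm1]; linarith
  have hn1 : (1:ℝ) ≤ (n:ℝ) := by exact_mod_cast hn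
  set b : ℤ := ⌊(n : ℝ) * β⌋ with hbdef
  have hb1 : (b:ℝ) ≤ (n:ℝ) * β := Int.floor_le _
  have hb2 : (n:ℝ) * β < (b:ℝ) + 1 := Int.lt_floor_add_one _
  have hβα : β * (α - 1) = α := by
    rw [hβ]; field_simp
  have hb1' : (b:ℝ) * (α - 1) ≤ (n:ℝ) * α := by
    have h := mul_le_mul_of_nonneg_right hb1 hαm1.le
    nlinarith [h, hβα]
  have hb2' : (n:ℝ) * α - (α - 1) < (b:ℝ) * (α - 1) := by
    have h := mul_lt_mul_of_pos_right hb2 hαm1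
    nlinarith [h, hβα]
  -- Lemma A : ⌊(⌊nα⌋+1)/α⌋ = n
  have ha1 : ((⌊(n : ℝ) * α⌋ : ℝ)) ≤ (n:ℝ) * α := Int.floor_le _
  have ha2 : (n:ℝ) * α < (⌊(n : ℝ) * α⌋ : ℝ) + 1 := Int.lt_floor_add_one _
  have hA : ⌊((⌊(n : ℝ) * α⌋ : ℝ) + 1) / α⌋ = (n : ℤ) := by
    rw [Int.floor_eq_iff]
    constructor
    · rw [le_div_iff₀ hα0]; push_cast; nlinarith
    · rw [div_lt_iff₀ hα0]; push_cast; nlinarith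
  -- Lemma B : ⌊b/α⌋ = b - n
  have hB : ⌊(b : ℝ) / α⌋ = b - (n : ℤ) := by
    rw [Int.floor_eq_iff]
    constructor
    · rw [le_div_iff₀ hα0]; push_cast; nlinarith
    · rw [div_lt_iff₀ hα0]; push_cast; nlinarith
  -- Lemma C : RHS = b - 2n
  have hC : ⌊((2 - α) / (α - 1)) * (n : ℝ)⌋ = b - 2 * (n : ℤ) := by
    have heq : ((2 - α) / (α - 1)) * (n : ℝ) = (n:ℝ) * β - ((2 * (n:ℤ) : ℤ) : ℝ) := by
      rw [hβ]; push_cast; field_simp; ring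
    rw [heq, Int.floor_sub_intCast, ← hbdef]
  rw [hA, hB, hC]
  ring
end

section
/- Let k be a positive integer and let α be irrational with 1/(k+1) < α < 1/k. Then for every nonnegative integer m, the number of positive integers n with ⌊nα⌋ = m is either k or k+1; moreover, the set of nonnegative integers m achieving multiplicity k is infinite, and the set of those achieving multiplicity k+1 is infinite. -/
theorem beatty_multiplicity_k_or_succ
    (k : ℕ) (hk : 0 < k) (α : ℝ) (hαirr : Irrational α)
    (hα1 : 1 / ((k : ℝ) + 1) < α) (hα2 : α < 1 / (k : ℝ)) :
    (∀ m : ℕ,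
      {n : ℕ | 0 < n ∧ ⌊(n : ℝ) * α⌋ = (m : ℤ)}.ncard = k ∨
      {n : ℕ | 0 < n ∧ ⌊(n : ℝ) * α⌋ = (m : ℤ)}.ncard = k + 1) ∧
    {m : ℕ | {n : ℕ | 0 < n ∧ ⌊(n : ℝ) * α⌋ = (m : ℤ)}.ncard = k}.Infinite ∧
    {m : ℕ | {n : ℕ | 0 < n ∧ ⌊(n : ℝ) * α⌋ = (m : ℤ)}.ncard = k + 1}.Infinite := by
  have hk0 : (0:ℝ) < k := by exact_mod_cast hk
  have hα0 : 0 < α := lt_trans (by positivity) hα1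
  have hβ1 : (k:ℝ) < 1/α := by
    rw [lt_div_iff₀ hα0]
    rw [lt_div_iff₀ hk0] at hα2
    linarith [mul_comm α (k:ℝ)]
  have hβ2 : 1/α < (k:ℝ)+1 := by
    rw [div_lt_iff₀ hα0]
    rw [div_lt_iff₀ (by positivity : (0:ℝ) < (k:ℝ)+1)] at hα1
    linarith [mul_comm α ((k:ℝ)+1)]
  -- A m = ⌊m/α⌋ as a natural number
  set A : ℕ → ℕ := fun m => (⌊(m:ℝ)/α⌋).toNat with hA
  have hAfloor : ∀ m : ℕ, (A m : ℤ) = ⌊(m:ℝ)/α⌋ := by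
    intro m
    exact Int.toNat_of_nonneg (Int.floor_nonneg.mpr (by positivity))
  have hA0 : A 0 = 0 := by
    simp [hA]
  have hset : ∀ m : ℕ, {n : ℕ | 0 < n ∧ ⌊(n:ℝ)*α⌋ = (m:ℤ)}
      = ↑(Finset.Ioc (A m) (A (m+1))) := by
    intro m
    ext n
    simp only [Finset.coe_Ioc, Set.mem_Ioc, Set.mem_setOf_eq]
    constructor
    · rintro ⟨hn, hfl⟩
      rw [Int.floor_eq_iff] at hfl
      obtain ⟨h1, h2⟩ := hfl
      push_cast at h1 h2
      have hle : (m:ℝ)/α ≤ n := (div_le_iff₀ hα0).mpr h1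
      have hlt : (m:ℝ)/α < n := by
        rcases Nat.eq_zero_or_pos m with hm | hm
        · subst hm
          simp only [Nat.cast_zero, zero_div]
          exact_mod_cast hn
        · refine lt_of_le_of_ne hle ?_
          have : Irrational ((m:ℝ)/α) := hαirr.natCast_div hm.ne'
          exact this.ne_nat n
      constructor
      · have h3 : ⌊(m:ℝ)/α⌋ < (n:ℤ) := Int.floor_lt.mpr (by exact_mod_cast hlt)
        rw [← hAfloor m] at h3
        exact_mod_cast h3
      · have h4 : (n:ℝ) ≤ ((m:ℝ)+1)/α := (le_div_iff₀ hα0).mpr (le_of_lt h2)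
        have h5 : (n:ℤ) ≤ ⌊((m:ℝ)+1)/α⌋ := Int.le_floor.mpr (by exact_mod_cast h4)
        have h6 : (⌊((m:ℝ)+1)/α⌋ : ℤ) = (A (m+1) : ℤ) := by
          rw [hAfloor (m+1)]; push_cast; ring_nf
        rw [h6] at h5
        exact_mod_cast h5
    · rintro ⟨h1, h2⟩
      have h1' : (m:ℝ)/α < n := by
        have : ⌊(m:ℝ)/α⌋ < (n:ℤ) := by rw [← hAfloor m]; exact_mod_cast h1
        exact_mod_cast Int.floor_lt.mp this
      have h2' : (n:ℝ) ≤ ((m:ℝ)+1)/α := by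
        have h6 : (⌊((m:ℝ)+1)/α⌋ : ℤ) = (A (m+1) : ℤ) := by
          rw [hAfloor (m+1)]; push_cast; ring_nf
        have : (n:ℤ) ≤ ⌊((m:ℝ)+1)/α⌋ := by rw [h6]; exact_mod_cast h2
        exact_mod_cast Int.le_floor.mp this
      have h2'' : (n:ℝ) < ((m:ℝ)+1)/α := by
        refine lt_of_le_of_ne h2' ?_
        have : Irrational (((m:ℝ)+1)/α) := by
          have := hαirr.natCast_div (Nat.succ_ne_zero m)
          push_cast at this
          exact this
        exact fun h => (this.ne_nat n) h.symm
      have hnpos : 0 < n := by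
        have : (0:ℝ) ≤ (m:ℝ)/α := by positivity
        have : (0:ℝ) < n := lt_of_le_of_lt this h1'
        exact_mod_cast this
      refine ⟨hnpos, ?_⟩
      rw [Int.floor_eq_iff]
      constructor
      · push_cast
        exact le_of_lt ((div_lt_iff₀ hα0).mp h1')
      · push_cast
        exact (lt_div_iff₀ hα0).mp h2''
  have hcard : ∀ m : ℕ, {n : ℕ | 0 < n ∧ ⌊(n:ℝ)*α⌋ = (m:ℤ)}.ncard = A (m+1) - A m := by
    intro m
    rw [hset m, Set.ncard_coe_finset, Nat.card_Ioc]
  have hlow : ∀ m : ℕ, A m + k ≤ A (m+1) := by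
    intro m
    have key : ⌊(m:ℝ)/α⌋ + (k:ℤ) ≤ ⌊((m:ℝ)+1)/α⌋ := by
      rw [← Int.floor_add_intCast]
      apply Int.floor_le_floor
      have : ((m:ℝ)+1)/α = (m:ℝ)/α + 1/α := by ring
      rw [this]
      push_cast
      linarith
    have e1 := hAfloor m
    have e2 : (⌊((m:ℝ)+1)/α⌋ : ℤ) = (A (m+1) : ℤ) := by
      rw [hAfloor (m+1)]; push_cast; ring_nf
    omega
  have hhigh : ∀ m : ℕ, A (m+1) ≤ A m + k + 1 := by
    intro m
    have key : ⌊((m:ℝ)+1)/α⌋ < ⌊(m:ℝ)/α⌋ + (k:ℤ) + 2 := by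
      rw [Int.floor_lt]
      push_cast
      have h1 : (m:ℝ)/α < ⌊(m:ℝ)/α⌋ + 1 := Int.lt_floor_add_one _
      have : ((m:ℝ)+1)/α = (m:ℝ)/α + 1/α := by ring
      rw [this]
      linarith
    have e1 := hAfloor m
    have e2 : (⌊((m:ℝ)+1)/α⌋ : ℤ) = (A (m+1) : ℤ) := by
      rw [hAfloor (m+1)]; push_cast; ring_nf
    omega
  have hkor : ∀ m : ℕ, A (m+1) - A m = k ∨ A (m+1) - A m = k + 1 := by
    intro m
    have := hlow m
    have := hhigh m
    omega
  -- real bounds on A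
  have hAle : ∀ M : ℕ, (A M : ℝ) ≤ (M:ℝ)/α := by
    intro M
    have := Int.floor_le ((M:ℝ)/α)
    have e := hAfloor M
    calc (A M : ℝ) = ((A M : ℤ) : ℝ) := by push_cast; ring
    _ = ((⌊(M:ℝ)/α⌋ : ℤ) : ℝ) := by rw [e]
    _ ≤ (M:ℝ)/α := this
  have hAgt : ∀ M : ℕ, (M:ℝ)/α - 1 < (A M : ℝ) := by
    intro M
    have := Int.lt_floor_add_one ((M:ℝ)/α)
    have e := hAfloor M
    have : (M:ℝ)/α < ((A M : ℤ) : ℝ) + 1 := by rw [e]; exact this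
    push_cast at this
    linarith
  refine ⟨fun m => by rw [hcard m]; exact hkor m, ?_, ?_⟩
  · -- the set with multiplicity k is infinite
    by_contra hfin
    rw [Set.not_infinite] at hfin
    obtain ⟨B, hB⟩ := hfin.bddAbove
    have hstep : ∀ m : ℕ, B < m → A (m+1) = A m + (k+1) := by
      intro m hm
      have hne : A (m+1) - A m ≠ k := by
        intro hcm
        have : m ∈ {m : ℕ | {n : ℕ | 0 < n ∧ ⌊(n:ℝ)*α⌋ = (m:ℤ)}.ncard = k} := by
          simp only [Set.mem_setOf_eq, hcard m, hcm]
        exact absurd (hB this) (not_le.mpr hm)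
      have := hkor m
      have := hlow m
      omega
    set M0 := B + 1 with hM0
    have htel : ∀ M : ℕ, A (M0 + M) = A M0 + (k+1) * M := by
      intro M
      induction M with
      | zero => simp
      | succ j ih =>
        have : M0 + (j+1) = (M0 + j) + 1 := by ring
        rw [this, hstep (M0 + j) (by omega), ih]
        ring
    -- contradiction: (k+1)*M ≤ A(M0+M) ≤ (M0+M)/α, but 1/α < k+1
    have hε : 0 < (k:ℝ) + 1 - 1/α := by linarith
    obtain ⟨M, hM⟩ := exists_nat_gt ((M0:ℝ)/α / ((k:ℝ)+1-1/α))
    have h1 : (A M0 : ℝ) + (k+1) * M ≤ ((M0:ℝ) + M)/α := by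
      have := hAle (M0 + M)
      rw [htel M] at this
      push_cast at this ⊢
      linarith
    have h2 : ((M0:ℝ) + M)/α = (M0:ℝ) * (1/α) + (M:ℝ) * (1/α) := by ring
    have h3 : (0:ℝ) ≤ (A M0 : ℝ) := by positivity
    have h4 : (M:ℝ) * ((k:ℝ)+1-1/α) ≤ (M0:ℝ) * (1/α) := by
      rw [h2] at h1
      nlinarith
    have h5 : (M0:ℝ)/α / ((k:ℝ)+1-1/α) * ((k:ℝ)+1-1/α) < (M:ℝ) * ((k:ℝ)+1-1/α) := by
      exact (mul_lt_mul_iff_left₀ hε).mpr hM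
    rw [div_mul_cancel₀ _ (ne_of_gt hε)] at h5
    have : (M0:ℝ)/α = (M0:ℝ) * (1/α) := by ring
    rw [this] at h5
    linarith
  · -- the set with multiplicity k+1 is infinite
    by_contra hfin
    rw [Set.not_infinite] at hfin
    obtain ⟨B, hB⟩ := hfin.bddAbove
    have hstep : ∀ m : ℕ, B < m → A (m+1) = A m + k := by
      intro m hm
      have hne : A (m+1) - A m ≠ k + 1 := by
        intro hcm
        have : m ∈ {m : ℕ | {n : ℕ | 0 < n ∧ ⌊(n:ℝ)*α⌋ = (m:ℤ)}.ncard = k+1} := by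
          simp only [Set.mem_setOf_eq, hcard m, hcm]
        exact absurd (hB this) (not_le.mpr hm)
      have := hkor m
      have := hlow m
      omega
    set M0 := B + 1 with hM0
    have htel : ∀ M : ℕ, A (M0 + M) = A M0 + k * M := by
      intro M
      induction M with
      | zero => simp
      | succ j ih =>
        have : M0 + (j+1) = (M0 + j) + 1 := by ring
        rw [this, hstep (M0 + j) (by omega), ih]
        ring
    have hδ : 0 < 1/α - (k:ℝ) := by linarith
    obtain ⟨M, hM⟩ := exists_nat_gt (((A M0 : ℝ) + 1) / (1/α - (k:ℝ)))
    have h1 : ((M0:ℝ) + M)/α - 1 < (A M0 : ℝ) + k * M := by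
      have := hAgt (M0 + M)
      rw [htel M] at this
      push_cast at this ⊢
      linarith
    have h2 : ((M0:ℝ) + M)/α = (M0:ℝ) * (1/α) + (M:ℝ) * (1/α) := by ring
    have h3 : (0:ℝ) ≤ (M0:ℝ) * (1/α) := by positivity
    have h4 : (M:ℝ) * (1/α - (k:ℝ)) < (A M0 : ℝ) + 1 := by
      rw [h2] at h1
      nlinarith
    have h5 : ((A M0 : ℝ) + 1) / (1/α - (k:ℝ)) * (1/α - (k:ℝ)) < (M:ℝ) * (1/α - (k:ℝ)) :=
      (mul_lt_mul_iff_left₀ hδ).mpr hM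
    rw [div_mul_cancel₀ _ (ne_of_gt hδ)] at h5
    linarith
end

section
/- Let k be a positive integer and let α be irrational with 1/(k+1) < α < 1/k, and set β = α/(1 − α). Then for every positive integer t, the number of positive integers n with ⌊nα⌋ = t equals k+1 if and only if the number of positive integers n with ⌊nβ⌋ = t equals k. -/
theorem beatty_multiplicity_transfer
    (k : ℕ) (hk : 0 < k) (α : ℝ) (hαirr : Irrational α)
    (hα1 : 1 / ((k : ℝ) + 1) < α) (hα2 : α < 1 / (k : ℝ))
    (β : ℝ) (hβ : β = α / (1 - α)) :
    ∀ t : ℕ, 0 < t →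
      ({n : ℕ | 0 < n ∧ ⌊(n : ℝ) * α⌋ = (t : ℤ)}.ncard = k + 1 ↔
       {n : ℕ | 0 < n ∧ ⌊(n : ℝ) * β⌋ = (t : ℤ)}.ncard = k) := by
  intro t ht
  have hk0 : (0:ℝ) < k := by exact_mod_cast hk
  have hk1 : (1:ℝ) ≤ k := by exact_mod_cast hk
  have hα0 : (0:ℝ) < α := lt_trans (by positivity) hα1
  have hα_lt1 : α < 1 := lt_of_lt_of_le hα2 (by rw [div_le_one hk0]; linarith)
  have h1α : (0:ℝ) < 1 - α := by linarith
  have hβirr : Irrational β := by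
    have h1 : β = (1-α)⁻¹ - (1:ℤ) := by
      rw [hβ]; push_cast; field_simp; ring
    rw [h1]
    have h2 : Irrational (1 - α) := by
      have := hαirr.intCast_sub 1; push_cast at this; exact this
    exact h2.inv.sub_intCast 1
  -- membership characterizations
  have hmemA : ∀ n : ℕ, (0 < n ∧ ⌊(n:ℝ) * α⌋ = (t:ℤ)) ↔
      (0 < n ∧ (t:ℝ) < n * α ∧ (n:ℝ) * α < t + 1) := by
    intro n
    constructor
    · rintro ⟨hn, hfl⟩
      have h1 := Int.floor_le ((n:ℝ) * α)
      have h2 := Int.lt_floor_add_one ((n:ℝ) * α)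
      rw [hfl] at h1 h2
      push_cast at h1 h2
      have hne : (n:ℝ) * α ≠ (t:ℝ) := by
        have := (hαirr.natCast_mul hn.ne').ne_int t
        simpa using this
      exact ⟨hn, lt_of_le_of_ne h1 (Ne.symm hne), h2⟩
    · rintro ⟨hn, h1, h2⟩
      refine ⟨hn, ?_⟩
      rw [Int.floor_eq_iff]
      push_cast
      exact ⟨h1.le, h2⟩
  have hmemB : ∀ m : ℕ, (0 < m ∧ ⌊(m:ℝ) * β⌋ = (t:ℤ)) ↔
      (0 < m ∧ (t:ℝ) < ((m:ℝ) + t) * α ∧ ((m:ℝ) + t + 1) * α < t + 1) := by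
    intro m
    have hbase : (0 < m ∧ ⌊(m:ℝ) * β⌋ = (t:ℤ)) ↔
        (0 < m ∧ (t:ℝ) < m * β ∧ (m:ℝ) * β < t + 1) := by
      constructor
      · rintro ⟨hm, hfl⟩
        have h1 := Int.floor_le ((m:ℝ) * β)
        have h2 := Int.lt_floor_add_one ((m:ℝ) * β)
        rw [hfl] at h1 h2
        push_cast at h1 h2
        have hne : (m:ℝ) * β ≠ (t:ℝ) := by
          have := (hβirr.natCast_mul hm.ne').ne_int t
          simpa using this
        exact ⟨hm, lt_of_le_of_ne h1 (Ne.symm hne), h2⟩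
      · rintro ⟨hm, h1, h2⟩
        refine ⟨hm, ?_⟩
        rw [Int.floor_eq_iff]
        push_cast
        exact ⟨h1.le, h2⟩
    rw [hbase, hβ]
    have key1 : ((t:ℝ) < m * (α / (1-α))) ↔ ((t:ℝ) < ((m:ℝ) + t) * α) := by
      rw [mul_div_assoc', lt_div_iff₀ h1α]
      constructor <;> intro h <;> nlinarith
    have key2 : ((m:ℝ) * (α / (1-α)) < t + 1) ↔ (((m:ℝ) + t + 1) * α < t + 1) := by
      rw [mul_div_assoc', div_lt_iff₀ h1α]
      constructor <;> intro h <;> nlinarith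
    rw [key1, key2]
  -- the special element N
  set N : ℕ := (⌊((t:ℝ) + 1) / α⌋).toNat with hN
  have hirrq : Irrational (((t:ℝ) + 1) / α) := by
    have h := hαirr.inv.natCast_mul (Nat.succ_ne_zero t)
    push_cast at h
    rw [div_eq_mul_inv]
    exact h
  have hfl_pos : (1:ℤ) ≤ ⌊((t:ℝ) + 1) / α⌋ := by
    rw [Int.le_floor]
    push_cast
    rw [le_div_iff₀ hα0]
    have : (1:ℝ) ≤ t := by exact_mod_cast ht
    nlinarith
  have hNcast : (N:ℤ) = ⌊((t:ℝ) + 1) / α⌋ := Int.toNat_of_nonneg (by linarith)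
  have hN_pos : 0 < N := by
    have : (1:ℤ) ≤ (N:ℤ) := by rw [hNcast]; exact hfl_pos
    exact_mod_cast this
  have hNle : (N:ℝ) ≤ ((t:ℝ)+1)/α := by
    have := Int.floor_le (((t:ℝ) + 1) / α)
    rw [← hNcast] at this
    exact_mod_cast this
  have hNne : (N:ℝ) ≠ ((t:ℝ)+1)/α := fun h => hirrq.ne_int N (by exact_mod_cast h.symm)
  have hNα : (N:ℝ) * α < t + 1 := by
    have h := lt_of_le_of_ne hNle hNne
    rw [lt_div_iff₀ hα0] at h
    linarith [h]
  have hN1α : (t:ℝ) + 1 < ((N:ℝ) + 1) * α := by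
    have := Int.lt_floor_add_one (((t:ℝ) + 1) / α)
    rw [← hNcast] at this
    push_cast at this
    rw [div_lt_iff₀ hα0] at this
    linarith
  have htN : (t:ℝ) < (N:ℝ) * α := by nlinarith
  -- set equation
  have hset : {n : ℕ | 0 < n ∧ ⌊(n : ℝ) * α⌋ = (t : ℤ)} =
      ((fun m => m + t) '' {n : ℕ | 0 < n ∧ ⌊(n : ℝ) * β⌋ = (t : ℤ)}) ∪ {N} := by
    ext n
    simp only [Set.mem_setOf_eq, Set.mem_union, Set.mem_image, Set.mem_singleton_iff,
      hmemA, hmemB]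
    constructor
    · rintro ⟨hn, h1, h2⟩
      have hnt : t < n := by
        have : (t:ℝ) < n := by nlinarith
        exact_mod_cast this
      have hirrn1 : ((n:ℝ) + 1) * α ≠ (t:ℝ) + 1 := by
        have := (hαirr.natCast_mul (Nat.succ_ne_zero n)).ne_int (t+1)
        push_cast at this ⊢
        intro h; exact this h
      rcases lt_or_gt_of_ne hirrn1 with hlt | hgt
      · left
        refine ⟨n - t, ⟨by omega, ?_, ?_⟩, by omega⟩
        · have : ((n - t : ℕ):ℝ) + t = (n:ℝ) := by
            push_cast [Nat.cast_sub hnt.le]; ring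
          rw [this]; exact h1
        · have : ((n - t : ℕ):ℝ) + t + 1 = (n:ℝ) + 1 := by
            push_cast [Nat.cast_sub hnt.le]; ring
          rw [this]; exact hlt
      · right
        have hlt1 : (n:ℝ) < (N:ℝ) + 1 := by
          have := lt_trans h2 hN1α
          exact lt_of_mul_lt_mul_right (by linarith) hα0.le
        have hlt2 : (N:ℝ) < (n:ℝ) + 1 := by
          have := lt_trans hNα hgt
          exact lt_of_mul_lt_mul_right (by linarith) hα0.le
        have h1' : n < N + 1 := by exact_mod_cast hlt1
        have h2' : N < n + 1 := by exact_mod_cast hlt2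
        omega
    · rintro (⟨m, ⟨hm, hm1, hm2⟩, rfl⟩ | rfl)
      · refine ⟨by omega, ?_, ?_⟩
        · have : ((m + t : ℕ):ℝ) = (m:ℝ) + t := by push_cast; ring
          rw [this]; exact hm1
        · have : ((m + t : ℕ):ℝ) * α < ((m:ℝ) + t + 1) * α := by
            push_cast; nlinarith
          linarith
      · exact ⟨hN_pos, htN, hNα⟩
  -- finiteness and cardinality
  have hAfin : {n : ℕ | 0 < n ∧ ⌊(n : ℝ) * α⌋ = (t : ℤ)}.Finite := by
    apply (Set.finite_Iic N).subset
    intro n hn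
    rw [Set.mem_setOf_eq, hmemA] at hn
    have : (n:ℝ) < (N:ℝ) + 1 := by
      have := lt_trans hn.2.2 hN1α
      exact lt_of_mul_lt_mul_right (by linarith) hα0.le
    have : n < N + 1 := by exact_mod_cast this
    simpa [Set.mem_Iic] using by omega
  have hinj : Function.Injective (fun m : ℕ => m + t) := add_left_injective t
  have hBfin : {n : ℕ | 0 < n ∧ ⌊(n : ℝ) * β⌋ = (t : ℤ)}.Finite := by
    apply Set.Finite.of_finite_image _ hinj.injOn
    apply hAfin.subset
    rw [hset]
    exact Set.subset_union_left
  have hdisj : Disjoint ((fun m => m + t) '' {n : ℕ | 0 < n ∧ ⌊(n : ℝ) * β⌋ = (t : ℤ)})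
      ({N} : Set ℕ) := by
    rw [Set.disjoint_singleton_right]
    rintro ⟨m, hm, hmN⟩
    rw [Set.mem_setOf_eq, hmemB] at hm
    have hmN' : (m:ℝ) + t = (N:ℝ) := by
      have : ((m + t : ℕ):ℝ) = (N:ℝ) := by exact_mod_cast congrArg (Nat.cast (R := ℝ)) hmN
      push_cast at this; linarith
    have := hm.2.2
    rw [hmN'] at this
    linarith
  have hcard : {n : ℕ | 0 < n ∧ ⌊(n : ℝ) * α⌋ = (t : ℤ)}.ncard =
      {n : ℕ | 0 < n ∧ ⌊(n : ℝ) * β⌋ = (t : ℤ)}.ncard + 1 := by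
    rw [hset, Set.ncard_union_eq hdisj (hBfin.image _) (Set.finite_singleton N),
      Set.ncard_image_of_injective _ hinj, Set.ncard_singleton]
  rw [hcard]
  omega
end

section
/- Let k be a positive integer and let α be irrational with 1/(k+1) < α < 1/k. Then there exist irrational numbers β, β′ > 1 with 1/β + 1/β′ = 1 such that the set of positive integers m whose multiplicity in the Beatty sequence with slope α equals k+1 is exactly {⌊nβ⌋ : n ≥ 1}, and the set of positive integers m whose multiplicity equals k is exactly {⌊nβ′⌋ : n ≥ 1}. -/
/-- Floor of an integer minus an irrational. -/
lemma aux_floor_int_sub (c : ℤ) (y : ℝ) (hy : Irrational y) :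
    ⌊(c : ℝ) - y⌋ = c - ⌊y⌋ - 1 := by
  have hceil : ⌈y⌉ = ⌊y⌋ + 1 := by
    have h1 : ⌈y⌉ ≤ ⌊y⌋ + 1 := Int.ceil_le_floor_add_one y
    have h2 : ⌊y⌋ ≤ ⌈y⌉ := Int.floor_le_ceil y
    have h3 : ⌈y⌉ ≠ ⌊y⌋ := by
      intro h
      have hle : y ≤ (⌊y⌋ : ℝ) := by
        have := Int.le_ceil y
        rwa [h] at this
      have hge : (⌊y⌋ : ℝ) ≤ y := Int.floor_le y
      exact hy.ne_int ⌊y⌋ (le_antisymm hle hge)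
    omega
  rw [sub_eq_add_neg, Int.floor_intCast_add, Int.floor_neg, hceil]
  ring

/-- Characterization of `⌊n * x⌋ = m` for positive irrational `x` and `m ≠ 0`. -/
lemma aux_floor_eq (x : ℝ) (hx0 : 0 < x) (hxirr : Irrational x)
    (m n : ℤ) (hm : 0 < m) :
    ⌊(n : ℝ) * x⌋ = m ↔
      ⌊(m : ℝ) * x⁻¹⌋ < n ∧ n ≤ ⌊((m : ℝ) + 1) * x⁻¹⌋ := by
  have hxi0 : 0 < x⁻¹ := inv_pos.2 hx0
  have h1 : Irrational ((m : ℝ) * x⁻¹) := hxirr.inv.intCast_mul (by omega)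
  have h2 : Irrational (((m : ℝ) + 1) * x⁻¹) := by
    have h := hxirr.inv.intCast_mul (m := m + 1) (by omega)
    have : ((m + 1 : ℤ) : ℝ) = (m : ℝ) + 1 := by push_cast; ring
    rwa [this] at h
  rw [Int.floor_eq_iff, Int.floor_lt, Int.le_floor]
  constructor
  · rintro ⟨ha, hb⟩
    constructor
    · have hle : (m : ℝ) * x⁻¹ ≤ n := by
        rw [← div_le_iff₀ hx0] at ha
        rwa [div_eq_mul_inv] at ha
      exact lt_of_le_of_ne hle (h1.ne_int n)
    · have : (n : ℝ) < ((m : ℝ) + 1) * x⁻¹ := by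
        rw [← lt_div_iff₀ hx0] at hb
        rwa [div_eq_mul_inv] at hb
      exact this.le
  · rintro ⟨ha, hb⟩
    constructor
    · rw [← div_le_iff₀ hx0, div_eq_mul_inv]
      exact ha.le
    · have hlt : (n : ℝ) < ((m : ℝ) + 1) * x⁻¹ :=
        lt_of_le_of_ne hb (fun h => (h2.ne_int n) h.symm)
      rw [← lt_div_iff₀ hx0, div_eq_mul_inv]
      exact hlt

theorem beatty_multiplicity_partition
    (k : ℕ) (hk : 0 < k) (α : ℝ) (hαirr : Irrational α)
    (hα1 : 1 / ((k : ℝ) + 1) < α) (hα2 : α < 1 / (k : ℝ)) :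
    ∃ β β' : ℝ, Irrational β ∧ Irrational β' ∧ 1 < β ∧ 1 < β' ∧
      1 / β + 1 / β' = 1 ∧
      {m : ℤ | 0 < m ∧
          {n : ℕ | 0 < n ∧ ⌊(n : ℝ) * α⌋ = m}.ncard = k + 1} =
        {m : ℤ | ∃ n : ℕ, 0 < n ∧ m = ⌊(n : ℝ) * β⌋} ∧
      {m : ℤ | 0 < m ∧
          {n : ℕ | 0 < n ∧ ⌊(n : ℝ) * α⌋ = m}.ncard = k} =
        {m : ℤ | ∃ n : ℕ, 0 < n ∧ m = ⌊(n : ℝ) * β'⌋} := by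
  have hk1 : (1 : ℝ) ≤ (k : ℝ) := by exact_mod_cast hk
  have hα0 : 0 < α := lt_trans (by positivity) hα1
  have hγ1 : (k : ℝ) < α⁻¹ := by
    rw [← one_div, lt_div_iff₀ hα0]
    have := (lt_div_iff₀ (by positivity : (0:ℝ) < (k:ℝ))).mp hα2
    linarith
  have hγ2 : α⁻¹ < (k : ℝ) + 1 := by
    rw [← one_div, div_lt_iff₀ hα0]
    have := (div_lt_iff₀ (by positivity : (0:ℝ) < (k:ℝ) + 1)).mp hα1
    linarith
  set θ : ℝ := α⁻¹ - (k : ℝ) with hθdef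
  have hθ0 : 0 < θ := by simp only [hθdef]; linarith
  have hθ1 : θ < 1 := by simp only [hθdef]; linarith
  have hθirr : Irrational θ := hαirr.inv.sub_natCast k
  have h1θ0 : 0 < 1 - θ := by linarith
  have h1θ1 : 1 - θ < 1 := by linarith
  have h1θirr : Irrational (1 - θ) := by
    have := hθirr.intCast_sub 1
    simpa using this
  -- irrationality of m*θ for m ≠ 0, etc.
  have hmθirr : ∀ m : ℤ, 0 < m → Irrational ((m : ℝ) * θ) :=
    fun m hm => hθirr.intCast_mul (by omega)
  have hm1θirr : ∀ m : ℤ, 0 < m → Irrational (((m : ℝ) + 1) * θ) := by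
    intro m hm
    have h := hθirr.intCast_mul (m := m + 1) (by omega)
    have hc : ((m + 1 : ℤ) : ℝ) = (m : ℝ) + 1 := by push_cast; ring
    rwa [hc] at h
  -- floor facts about θ
  have hfl_nonneg : ∀ m : ℤ, 0 < m → 0 ≤ ⌊(m : ℝ) * θ⌋ := by
    intro m hm
    apply Int.floor_nonneg.2
    have : (0 : ℝ) < (m : ℝ) := by exact_mod_cast hm
    positivity
  have hfl_lt : ∀ m : ℤ, 0 < m → ⌊(m : ℝ) * θ⌋ < m := by
    intro m hm
    rw [Int.floor_lt]
    have hm' : (0 : ℝ) < (m : ℝ) := by exact_mod_cast hm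
    nlinarith
  have hfl_mono : ∀ m : ℤ, 0 < m → ⌊(m : ℝ) * θ⌋ ≤ ⌊((m : ℝ) + 1) * θ⌋ := by
    intro m hm
    apply Int.floor_le_floor
    nlinarith
  have hfl_step : ∀ m : ℤ, 0 < m → ⌊((m : ℝ) + 1) * θ⌋ ≤ ⌊(m : ℝ) * θ⌋ + 1 := by
    intro m hm
    have h1 : ((m : ℝ) + 1) * θ ≤ (m : ℝ) * θ + 1 := by nlinarith
    calc ⌊((m : ℝ) + 1) * θ⌋ ≤ ⌊(m : ℝ) * θ + 1⌋ := Int.floor_le_floor h1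
      _ = ⌊(m : ℝ) * θ⌋ + 1 := by
          rw [show ((1:ℝ)) = ((1:ℤ):ℝ) by norm_num, Int.floor_add_intCast]
  -- relating floors of m * α⁻¹ to floors of m * θ
  have hfloorγ : ∀ m : ℤ, ⌊(m : ℝ) * α⁻¹⌋ = ⌊(m : ℝ) * θ⌋ + m * k := by
    intro m
    have h : (m : ℝ) * α⁻¹ = (m : ℝ) * θ + ((m * k : ℤ) : ℝ) := by
      rw [hθdef]; push_cast; ring
    rw [h, Int.floor_add_intCast]
  have hfloorγ' : ∀ m : ℤ,
      ⌊((m : ℝ) + 1) * α⁻¹⌋ = ⌊((m : ℝ) + 1) * θ⌋ + (m + 1) * k := by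
    intro m
    have h : ((m : ℝ) + 1) * α⁻¹ = ((m : ℝ) + 1) * θ + (((m + 1) * k : ℤ) : ℝ) := by
      rw [hθdef]; push_cast; ring
    rw [h, Int.floor_add_intCast]
  -- cardinality computation
  have hcard : ∀ m : ℤ, 0 < m →
      {n : ℕ | 0 < n ∧ ⌊(n : ℝ) * α⌋ = m}.ncard
        = (⌊((m : ℝ) + 1) * α⁻¹⌋ - ⌊(m : ℝ) * α⁻¹⌋).toNat := by
    intro m hm
    have ha0 : 0 ≤ ⌊(m : ℝ) * α⁻¹⌋ := by
      apply Int.floor_nonneg.2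
      have : (0 : ℝ) < (m : ℝ) := by exact_mod_cast hm
      positivity
    have hset : {n : ℕ | 0 < n ∧ ⌊(n : ℝ) * α⌋ = m}
        = ↑(Finset.Ioc (⌊(m : ℝ) * α⁻¹⌋).toNat (⌊((m : ℝ) + 1) * α⁻¹⌋).toNat) := by
      ext n
      simp only [Set.mem_setOf_eq, Finset.coe_Ioc, Set.mem_Ioc]
      have hcast : ((n : ℤ) : ℝ) = (n : ℝ) := by push_cast; ring
      have hiff := aux_floor_eq α hα0 hαirr m (n : ℤ) hm
      rw [hcast] at hiff
      rw [hiff]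
      omega
    rw [hset, Set.ncard_coe_finset, Nat.card_Ioc]
    omega
  -- Beatty membership for β = θ⁻¹
  have hβiff : ∀ m : ℤ, 0 < m →
      ((∃ n : ℕ, 0 < n ∧ m = ⌊(n : ℝ) * θ⁻¹⌋) ↔
        ⌊(m : ℝ) * θ⌋ < ⌊((m : ℝ) + 1) * θ⌋) := by
    intro m hm
    have hiff : ∀ n : ℤ, ⌊(n : ℝ) * θ⁻¹⌋ = m ↔
        ⌊(m : ℝ) * θ⌋ < n ∧ n ≤ ⌊((m : ℝ) + 1) * θ⌋ := by
      intro n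
      have h := aux_floor_eq θ⁻¹ (inv_pos.2 hθ0) hθirr.inv m n hm
      rwa [inv_inv] at h
    constructor
    · rintro ⟨n, hn, hmn⟩
      have hcast : ((n : ℤ) : ℝ) = (n : ℝ) := by push_cast; ring
      have := (hiff (n : ℤ)).mp (by rw [hcast]; exact hmn.symm)
      omega
    · intro h
      refine ⟨(⌊((m : ℝ) + 1) * θ⌋).toNat, ?_, ?_⟩
      · have := hfl_nonneg m hm; omega
      · have hb0 : 0 ≤ ⌊((m : ℝ) + 1) * θ⌋ := le_of_lt (lt_of_le_of_lt (hfl_nonneg m hm) h)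
        have hcast : (((⌊((m : ℝ) + 1) * θ⌋).toNat : ℕ) : ℝ)
            = ((⌊((m : ℝ) + 1) * θ⌋ : ℤ) : ℝ) := by
          exact_mod_cast congrArg (fun z : ℤ => (z : ℝ)) (Int.toNat_of_nonneg hb0)
        rw [hcast]
        exact ((hiff ⌊((m : ℝ) + 1) * θ⌋).mpr ⟨h, le_refl _⟩).symm
    -- done
  -- Beatty membership for β' = (1-θ)⁻¹
  have hβ'iff : ∀ m : ℤ, 0 < m →
      ((∃ n : ℕ, 0 < n ∧ m = ⌊(n : ℝ) * (1 - θ)⁻¹⌋) ↔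
        ⌊((m : ℝ) + 1) * θ⌋ ≤ ⌊(m : ℝ) * θ⌋) := by
    intro m hm
    have hfa : ⌊(m : ℝ) * (1 - θ)⌋ = m - ⌊(m : ℝ) * θ⌋ - 1 := by
      have h : (m : ℝ) * (1 - θ) = ((m : ℤ) : ℝ) - (m : ℝ) * θ := by push_cast; ring
      rw [h, aux_floor_int_sub m _ (hmθirr m hm)]
    have hfb : ⌊((m : ℝ) + 1) * (1 - θ)⌋ = m - ⌊((m : ℝ) + 1) * θ⌋ := by
      have h : ((m : ℝ) + 1) * (1 - θ) = ((m + 1 : ℤ) : ℝ) - ((m : ℝ) + 1) * θ := by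
        push_cast; ring
      rw [h, aux_floor_int_sub (m + 1) _ (hm1θirr m hm)]
      ring
    have hiff : ∀ n : ℤ, ⌊(n : ℝ) * (1 - θ)⁻¹⌋ = m ↔
        m - ⌊(m : ℝ) * θ⌋ - 1 < n ∧ n ≤ m - ⌊((m : ℝ) + 1) * θ⌋ := by
      intro n
      have h := aux_floor_eq (1 - θ)⁻¹ (inv_pos.2 h1θ0) h1θirr.inv m n hm
      rwa [inv_inv, hfa, hfb] at h
    constructor
    · rintro ⟨n, hn, hmn⟩
      have hcast : ((n : ℤ) : ℝ) = (n : ℝ) := by push_cast; ring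
      have := (hiff (n : ℤ)).mp (by rw [hcast]; exact hmn.symm)
      omega
    · intro h
      have hlt := hfl_lt m hm
      have hnn := hfl_nonneg m hm
      refine ⟨(m - ⌊((m : ℝ) + 1) * θ⌋).toNat, by omega, ?_⟩
      have hb0 : 0 ≤ m - ⌊((m : ℝ) + 1) * θ⌋ := by omega
      have hcast : (((m - ⌊((m : ℝ) + 1) * θ⌋).toNat : ℕ) : ℝ)
          = ((m - ⌊((m : ℝ) + 1) * θ⌋ : ℤ) : ℝ) := by
        exact_mod_cast congrArg (fun z : ℤ => (z : ℝ)) (Int.toNat_of_nonneg hb0)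
      rw [hcast]
      exact ((hiff (m - ⌊((m : ℝ) + 1) * θ⌋)).mpr ⟨by omega, le_refl _⟩).symm
  -- positivity of Beatty terms
  have hpos : ∀ x : ℝ, 1 < x → ∀ n : ℕ, 0 < n → 0 < ⌊(n : ℝ) * x⌋ := by
    intro x hx n hn
    have hn1 : (1 : ℝ) ≤ (n : ℝ) := by exact_mod_cast hn
    have : (1 : ℝ) ≤ (n : ℝ) * x := by nlinarith
    have := Int.le_floor.2 (by exact_mod_cast this : ((1 : ℤ) : ℝ) ≤ (n : ℝ) * x)
    omega
  have hβgt1 : 1 < θ⁻¹ := (one_lt_inv_iff₀).mpr ⟨hθ0, hθ1⟩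
  have hβ'gt1 : 1 < (1 - θ)⁻¹ := (one_lt_inv_iff₀).mpr ⟨h1θ0, h1θ1⟩
  refine ⟨θ⁻¹, (1 - θ)⁻¹, hθirr.inv, h1θirr.inv, hβgt1, hβ'gt1, ?_, ?_, ?_⟩
  · rw [one_div, one_div, inv_inv, inv_inv]; ring
  · ext m
    simp only [Set.mem_setOf_eq]
    constructor
    · rintro ⟨hm, hc⟩
      refine (hβiff m hm).mpr ?_
      have h1 := hcard m hm
      have h2 := hfloorγ m
      have h3 := hfloorγ' m
      have h4 := hfl_mono m hm
      have h5 := hfl_step m hm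
      have hkk : (m + 1) * (k : ℤ) = m * k + k := by ring
      omega
    · rintro ⟨n, hn, hmn⟩
      have hm : 0 < m := hmn ▸ hpos θ⁻¹ hβgt1 n hn
      have hδ := (hβiff m hm).mp ⟨n, hn, hmn⟩
      refine ⟨hm, ?_⟩
      have h1 := hcard m hm
      have h2 := hfloorγ m
      have h3 := hfloorγ' m
      have h5 := hfl_step m hm
      have hkk : (m + 1) * (k : ℤ) = m * k + k := by ring
      omega
  · ext m
    simp only [Set.mem_setOf_eq]
    constructor
    · rintro ⟨hm, hc⟩
      refine (hβ'iff m hm).mpr ?_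
      have h1 := hcard m hm
      have h2 := hfloorγ m
      have h3 := hfloorγ' m
      have h4 := hfl_mono m hm
      have h5 := hfl_step m hm
      have hkk : (m + 1) * (k : ℤ) = m * k + k := by ring
      omega
    · rintro ⟨n, hn, hmn⟩
      have hm : 0 < m := hmn ▸ hpos (1 - θ)⁻¹ hβ'gt1 n hn
      have hδ := (hβ'iff m hm).mp ⟨n, hn, hmn⟩
      refine ⟨hm, ?_⟩
      have h1 := hcard m hm
      have h2 := hfloorγ m
      have h3 := hfloorγ' m
      have h4 := hfl_mono m hm
      have hkk : (m + 1) * (k : ℤ) = m * k + k := by ring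
      omega
end

section
/- Let α be irrational with 1 < α < 2 and let β satisfy 1/α + 1/β = 1. Set a_n = ⌊nα⌋ and b_n = ⌊nβ⌋ for n ≥ 1, b_0 = 0, B = {⌊mβ⌋ : m ≥ 1}, and define r_n as the number of integers m ∈ B with a_n < m ≤ b_{n−1}. Then for every n ≥ 1, the difference r_{n+1} − r_n is 0 or 1, and r_{n+1} − r_n = 1 if and only if a_{n+1} − a_n = 1. -/
theorem r_difference_sturmian
    (α β : ℝ) (hαirr : Irrational α)
    (hα1 : 1 < α) (hα2 : α < 2) (hsum : 1 / α + 1 / β = 1)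
    (a b : ℕ → ℤ)
    (ha : ∀ n : ℕ, a n = ⌊(n : ℝ) * α⌋)
    (hb : ∀ n : ℕ, b n = ⌊(n : ℝ) * β⌋)
    (r : ℕ → ℕ)
    (hr : ∀ n : ℕ, r n =
      {m : ℤ | (∃ k : ℕ, 0 < k ∧ m = ⌊(k : ℝ) * β⌋) ∧
        a n < m ∧ m ≤ b (n - 1)}.ncard) :
    ∀ n : ℕ, 0 < n →
      ((r (n + 1) : ℤ) - (r n : ℤ) = 0 ∨ (r (n + 1) : ℤ) - (r n : ℤ) = 1) ∧
      ((r (n + 1) : ℤ) - (r n : ℤ) = 1 ↔ a (n + 1) - a n = 1) := by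
  have hα0 : (0:ℝ) < α := by linarith
  have hαne : α ≠ 0 := ne_of_gt hα0
  have h1α : 1/α < 1 := by rw [div_lt_one hα0]; linarith
  have h1β : (0:ℝ) < 1/β := by linarith
  have hβ0 : (0:ℝ) < β := one_div_pos.mp h1β
  have hβne : β ≠ 0 := ne_of_gt hβ0
  have hmul : α * β = α + β := by
    field_simp at hsum; linarith
  have h2β : 2 < β := by nlinarith
  have heqk : ∀ k : ℝ, (k*β)*(α-1) = k*α := by
    intro k; linear_combination k * hmul
  -- key counting fact: ⌊kβ⌋ ≤ ⌊nα⌋ ↔ k ≤ ⌊nα⌋ - n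
  have hcount : ∀ (n k : ℕ), (⌊(k:ℝ)*β⌋ ≤ ⌊(n:ℝ)*α⌋ ↔ (k:ℤ) ≤ ⌊(n:ℝ)*α⌋ - n) := by
    intro n k
    set N := ⌊(n:ℝ)*α⌋ with hNdef
    have hN1 : (N:ℝ) ≤ (n:ℝ)*α := Int.floor_le _
    have hN2 : (n:ℝ)*α < (N:ℝ)+1 := Int.lt_floor_add_one _
    constructor
    · intro h
      by_contra hc
      push_neg at hc
      have hk : ((N:ℝ) - n + 1) ≤ (k:ℝ) := by
        have : N - n + 1 ≤ (k:ℤ) := hc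
        exact_mod_cast this
    -- (N+1)*(α-1) < k*α
      have hI : ((N:ℝ)+1)*(α-1) < (k:ℝ)*α := by
        nlinarith [mul_le_mul_of_nonneg_right hk hα0.le]
      rw [← heqk (k:ℝ)] at hI
      have hI2 : ((N:ℝ)+1) < (k:ℝ)*β :=
        (mul_lt_mul_iff_of_pos_right (by linarith : (0:ℝ) < α-1)).mp hI
      have : N + 1 ≤ ⌊(k:ℝ)*β⌋ := Int.le_floor.mpr (by push_cast; linarith)
      omega
    · intro h
      have hk : (k:ℝ) ≤ (N:ℝ) - n := by exact_mod_cast h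
      have hI : (k:ℝ)*α < ((N:ℝ)+1)*(α-1) := by
        nlinarith [mul_le_mul_of_nonneg_right hk hα0.le]
      rw [← heqk (k:ℝ)] at hI
      have hI2 : (k:ℝ)*β < ((N:ℝ)+1) :=
        (mul_lt_mul_iff_of_pos_right (by linarith : (0:ℝ) < α-1)).mp hI
      have : ⌊(k:ℝ)*β⌋ < N + 1 := Int.floor_lt.mpr (by push_cast; linarith)
      omega
  -- strict monotonicity of k ↦ ⌊kβ⌋
  have hmono : StrictMono (fun k : ℕ => ⌊(k:ℝ)*β⌋) := by
    intro k l hkl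
    have hkl' : (k:ℝ)+1 ≤ (l:ℝ) := by exact_mod_cast hkl
    have h1 : (k:ℝ)*β + 1 ≤ (l:ℝ)*β := by nlinarith
    have h2 : ⌊(k:ℝ)*β + 1⌋ ≤ ⌊(l:ℝ)*β⌋ := Int.floor_le_floor h1
    have h3 : ⌊(k:ℝ)*β + 1⌋ = ⌊(k:ℝ)*β⌋ + 1 := by
      exact_mod_cast Int.floor_add_intCast ((k:ℝ)*β) 1
    simp only []
    omega
  -- the formula r n = 2n - 1 - a n for n ≥ 1
  have hrn : ∀ n : ℕ, 0 < n → (r n : ℤ) = 2*(n:ℤ) - 1 - a n := by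
    intro n hn
    set N := ⌊(n:ℝ)*α⌋ with hNdef
    have haN : a n = N := ha n
    have hNge : (n:ℤ) ≤ N := Int.le_floor.mpr (by push_cast; nlinarith)
    have hNle : N ≤ 2*(n:ℤ) - 1 := by
      have h1 : (n:ℝ)*α < ((2*(n:ℤ)):ℤ) := by
        push_cast
        nlinarith [show (0:ℝ) < (n:ℝ) from by exact_mod_cast hn]
      have := Int.floor_lt.mpr h1
      omega
    set t := (N - n).toNat with htdef
    have htN : (t:ℤ) = N - n := Int.toNat_of_nonneg (by omega)
    have hset : {m : ℤ | (∃ k : ℕ, 0 < k ∧ m = ⌊(k:ℝ)*β⌋) ∧ a n < m ∧ m ≤ b (n-1)}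
        = (fun k : ℕ => ⌊(k:ℝ)*β⌋) '' ↑(Finset.Ioc t (n-1)) := by
      ext m
      simp only [Set.mem_setOf_eq, Set.mem_image, Finset.coe_Ioc, Set.mem_Ioc]
      constructor
      · rintro ⟨⟨k, hk0, rfl⟩, h1, h2⟩
        refine ⟨k, ⟨?_, ?_⟩, rfl⟩
        · have hnot : ¬ ((k:ℤ) ≤ N - n) := by
            intro hle
            have := (hcount n k).mpr hle
            rw [haN] at h1
            omega
          omega
        · rw [hb (n-1)] at h2
          exact hmono.le_iff_le.mp h2
      · rintro ⟨k, ⟨hk1, hk2⟩, rfl⟩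
        have hk0 : 0 < k := lt_of_le_of_lt (Nat.zero_le t) hk1
        refine ⟨⟨k, hk0, rfl⟩, ?_, ?_⟩
        · rw [haN]
          have hnot : ¬ ((k:ℤ) ≤ N - n) := by omega
          have := mt (hcount n k).mp hnot
          omega
        · rw [hb (n-1)]
          exact hmono.le_iff_le.mpr hk2
    have hcard : r n = (n - 1) - t := by
      rw [hr n, hset, Set.ncard_image_of_injective _ hmono.injective,
        Set.ncard_coe_finset, Nat.card_Ioc]
    rw [hcard, haN]
    omega
  intro n hn
  have h1 := hrn n hn
  have h2 := hrn (n+1) (by omega)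
  have hstep : a (n+1) - a n = 1 ∨ a (n+1) - a n = 2 := by
    rw [ha, ha]
    have hfl : (⌊(n:ℝ)*α⌋ : ℝ) ≤ (n:ℝ)*α := Int.floor_le _
    have hfl2 : (n:ℝ)*α < (⌊(n:ℝ)*α⌋ : ℝ) + 1 := Int.lt_floor_add_one _
    have l1 : ⌊(n:ℝ)*α⌋ + 1 ≤ ⌊((n+1:ℕ):ℝ)*α⌋ := by
      apply Int.le_floor.mpr
      push_cast
      nlinarith
    have l2 : ⌊((n+1:ℕ):ℝ)*α⌋ ≤ ⌊(n:ℝ)*α⌋ + 2 := by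
      have : ⌊((n+1:ℕ):ℝ)*α⌋ < ⌊(n:ℝ)*α⌋ + 3 := by
        apply Int.floor_lt.mpr
        push_cast
        nlinarith
      omega
    omega
  push_cast at h2
  omega
end

section
/- Let α be irrational with 1 < α < 2 and let β satisfy 1/α + 1/β = 1 (so that β > 2), and set q = ⌊β⌋. Set a_n = ⌊nα⌋, b_n = ⌊nβ⌋, A = {⌊mα⌋ : m ≥ 1}, and define c_n as the number of integers m ∈ A with a_n < m < b_n. Then for every n ≥ 1, the difference c_{n+1} − c_n equals q − 2 or q − 1, and c_{n+1} − c_n = q − 2 if and only if b_{n+1} − b_n = q. -/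
theorem c_difference_sturmian
    (α β : ℝ) (hαirr : Irrational α)
    (hα1 : 1 < α) (hα2 : α < 2) (hsum : 1 / α + 1 / β = 1)
    (q : ℤ) (hq : q = ⌊β⌋)
    (a b : ℕ → ℤ)
    (ha : ∀ n : ℕ, a n = ⌊(n : ℝ) * α⌋)
    (hb : ∀ n : ℕ, b n = ⌊(n : ℝ) * β⌋)
    (c : ℕ → ℕ)
    (hc : ∀ n : ℕ, c n =
      {m : ℤ | (∃ k : ℕ, 0 < k ∧ m = ⌊(k : ℝ) * α⌋) ∧
        a n < m ∧ m < b n}.ncard) :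
    ∀ n : ℕ, 0 < n →
      ((c (n + 1) : ℤ) - (c n : ℤ) = q - 2 ∨ (c (n + 1) : ℤ) - (c n : ℤ) = q - 1) ∧
      ((c (n + 1) : ℤ) - (c n : ℤ) = q - 2 ↔ b (n + 1) - b n = q) := by
  have hα0 : (0:ℝ) < α := by linarith
  have hαne : α ≠ 0 := ne_of_gt hα0
  have hβne : β ≠ 0 := by
    intro h
    rw [h, div_zero, add_zero] at hsum
    have : α = 1 := by field_simp at hsum; linarith
    linarith
  have hαβ : α + β = α * β := by
    field_simp at hsum
    linarith
  have hβα : β * (α - 1) = α := by ring_nf; linarith [hαβ]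
  have hβ2 : 2 < β := by nlinarith [hβα, hα1, hα2]
  -- strict monotonicity of k ↦ ⌊kα⌋
  have hmono : ∀ k l : ℕ, k < l → ⌊(k:ℝ)*α⌋ < ⌊(l:ℝ)*α⌋ := by
    intro k l hkl
    have hc1 : (k:ℝ) + 1 ≤ l := by exact_mod_cast hkl
    have h1 : (k:ℝ)*α + 1 ≤ (l:ℝ)*α := by nlinarith [Nat.cast_nonneg (α := ℝ) k]
    calc ⌊(k:ℝ)*α⌋ < ⌊(k:ℝ)*α⌋ + 1 := lt_add_one _
      _ = ⌊(k:ℝ)*α + 1⌋ := (Int.floor_add_one _).symm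
      _ ≤ ⌊(l:ℝ)*α⌋ := Int.floor_le_floor h1
  have hirr : ∀ k : ℕ, 0 < k → Irrational ((k:ℝ)*α) := by
    intro k hk
    exact hαirr.natCast_mul (by omega)
  have hfl : ∀ k : ℕ, 0 < k → (⌊(k:ℝ)*α⌋ : ℝ) < (k:ℝ)*α := by
    intro k hk
    refine (Int.floor_le _).lt_of_ne ?_
    intro h
    exact (hirr k hk).ne_int ⌊(k:ℝ)*α⌋ h.symm
  -- key value: c n = b n - 2n for n ≥ 1
  have hcval : ∀ n : ℕ, 0 < n → (c n : ℤ) = b n - 2 * n := by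
    intro n hn
    have hn1 : (1:ℝ) ≤ n := by exact_mod_cast hn
    have hbleR : ((b n : ℤ) : ℝ) ≤ (n:ℝ) * β := by rw [hb]; exact_mod_cast Int.floor_le _
    have hbltR : (n:ℝ) * β - 1 < ((b n : ℤ) : ℝ) := by
      rw [hb]; linarith [Int.lt_floor_add_one ((n:ℝ)*β)]
    have h2n : 2 * (n:ℤ) ≤ b n := by
      rw [hb]
      refine Int.le_floor.2 ?_
      push_cast
      nlinarith
    set t : ℕ := (b n - n).toNat with ht
    have htz : (t:ℤ) = b n - n := Int.toNat_of_nonneg (by omega)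
    have hnt : n ≤ t := by omega
    have htR : (t:ℝ) = ((b n : ℤ):ℝ) - (n:ℝ) := by exact_mod_cast htz
    have hnb : (n:ℝ) * (β*(α-1)) = (n:ℝ)*α := by rw [hβα]
    have ht_up : (t:ℝ)*α ≤ ((b n : ℤ):ℝ) := by
      rw [htR]
      have h1 := mul_le_mul_of_nonneg_right hbleR (by linarith : (0:ℝ) ≤ α - 1)
      nlinarith [h1, hnb]
    have ht_lo : ((b n : ℤ):ℝ) < ((t:ℝ) + 1)*α := by
      rw [htR]
      have h2 := mul_lt_mul_of_pos_right hbltR (by linarith : (0:ℝ) < α - 1)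
      nlinarith [h2, hnb]
    -- the counted set as a finset image
    set S : Finset ℤ := (Finset.Ioc n t).image (fun k : ℕ => ⌊(k:ℝ)*α⌋) with hS
    have hset : {m : ℤ | (∃ k : ℕ, 0 < k ∧ m = ⌊(k : ℝ) * α⌋) ∧ a n < m ∧ m < b n} = ↑S := by
      ext m
      simp only [hS, Set.mem_setOf_eq, Finset.coe_image, Set.mem_image, Finset.mem_coe,
        Finset.mem_Ioc]
      constructor
      · rintro ⟨⟨k, hk0, rfl⟩, h1, h2⟩
        refine ⟨k, ⟨?_, ?_⟩, rfl⟩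
        · by_contra hkn
          push_neg at hkn
          have hle : (k:ℝ)*α ≤ (n:ℝ)*α := by
            have : (k:ℝ) ≤ n := by exact_mod_cast hkn
            nlinarith
          have := Int.floor_le_floor hle
          rw [ha] at h1
          omega
        · have hklt : (k:ℝ)*α < ((b n : ℤ):ℝ) := by
            have h3 := Int.lt_floor_add_one ((k:ℝ)*α)
            have h4 : (⌊(k:ℝ)*α⌋:ℝ) + 1 ≤ ((b n : ℤ):ℝ) := by exact_mod_cast h2
            linarith
          have hka : (k:ℝ)*α < ((t:ℝ)+1)*α := by linarith
          have : (k:ℝ) < (t:ℝ) + 1 := lt_of_mul_lt_mul_right hka (le_of_lt hα0)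
          have : k < t + 1 := by exact_mod_cast this
          omega
      · rintro ⟨k, ⟨hk1, hk2⟩, rfl⟩
        refine ⟨⟨k, by omega, rfl⟩, ?_, ?_⟩
        · rw [ha]; exact hmono n k hk1
        · have h5 : (⌊(k:ℝ)*α⌋:ℝ) < (k:ℝ)*α := hfl k (by omega)
          have h6 : (k:ℝ)*α ≤ (t:ℝ)*α := by
            have : (k:ℝ) ≤ t := by exact_mod_cast hk2
            nlinarith
          have : (⌊(k:ℝ)*α⌋:ℝ) < ((b n : ℤ):ℝ) := by linarith
          exact_mod_cast this
    have hcard : S.card = t - n := by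
      rw [hS, Finset.card_image_of_injOn, Nat.card_Ioc]
      intro x _ y _ hxy
      rcases lt_trichotomy x y with h | h | h
      · exact absurd hxy (ne_of_lt (hmono x y h))
      · exact h
      · exact absurd hxy.symm (ne_of_lt (hmono y x h))
    have : c n = t - n := by rw [hc, hset, Set.ncard_coe_finset, hcard]
    rw [this]
    omega
  -- difference of b's
  intro n hn
  have hq1 : ((q:ℤ):ℝ) ≤ β := by rw [hq]; exact_mod_cast Int.floor_le β
  have hq2 : β < ((q:ℤ):ℝ) + 1 := by rw [hq]; exact_mod_cast Int.lt_floor_add_one β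
  have hbl : b n + q ≤ b (n+1) := by
    rw [hb, hb]
    refine Int.le_floor.2 ?_
    push_cast
    have h1 : ((⌊(n:ℝ)*β⌋:ℤ):ℝ) ≤ (n:ℝ)*β := Int.floor_le _
    nlinarith
  have hbu : b (n+1) ≤ b n + q + 1 := by
    rw [hb, hb]
    have h2 : ⌊((n:ℝ)+1)*β⌋ < ⌊(n:ℝ)*β⌋ + q + 2 := by
      refine Int.floor_lt.2 ?_
      push_cast
      have h3 : (n:ℝ)*β < ((⌊(n:ℝ)*β⌋:ℤ):ℝ) + 1 := Int.lt_floor_add_one _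
      nlinarith
    have : ((n:ℕ)+1 : ℝ) = ((n:ℝ)+1) := by push_cast; ring
    rw [show ((n+1 : ℕ):ℝ) = (n:ℝ)+1 by push_cast; ring]
    omega
  have e1 := hcval n hn
  have e2 := hcval (n+1) (Nat.succ_pos n)
  have hd : (c (n+1) : ℤ) - (c n : ℤ) = (b (n+1) - b n) - 2 := by
    rw [e1, e2]; push_cast; ring
  constructor
  · omega
  · omega
end

section
/- Let α be irrational with 1 < α < 2 and let β satisfy 1/α + 1/β = 1. Set a_n = ⌊nα⌋ and b_n = ⌊nβ⌋ for n ≥ 1, b_0 = 0, B = {⌊mβ⌋ : m ≥ 1}, and define r_n as the number of integers m ∈ B with a_n < m ≤ b_{n−1}. Then there exists a real number r with 0 < r < 1 such that r_n = ⌊rn⌋ for all n ≥ 1. -/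
theorem r_is_beatty
    (α β : ℝ) (hαirr : Irrational α)
    (hα1 : 1 < α) (hα2 : α < 2) (hsum : 1 / α + 1 / β = 1)
    (a b : ℕ → ℤ)
    (ha : ∀ n : ℕ, a n = ⌊(n : ℝ) * α⌋)
    (hb : ∀ n : ℕ, b n = ⌊(n : ℝ) * β⌋)
    (r : ℕ → ℕ)
    (hr : ∀ n : ℕ, r n =
      {m : ℤ | (∃ k : ℕ, 0 < k ∧ m = ⌊(k : ℝ) * β⌋) ∧
        a n < m ∧ m ≤ b (n - 1)}.ncard) :
    ∃ s : ℝ, 0 < s ∧ s < 1 ∧ ∀ n : ℕ, 0 < n → (r n : ℤ) = ⌊s * (n : ℝ)⌋ := by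
  have hα0 : (0:ℝ) < α := by linarith
  have hαm1 : (0:ℝ) < α - 1 := by linarith
  have hβ0 : β ≠ 0 := by
    intro h
    rw [h, div_zero, add_zero] at hsum
    have : α = 1 := by
      field_simp at hsum
      linarith
    linarith
  have hβ : β = α / (α - 1) := by
    have h1 : 1 / β = (α - 1) / α := by
      field_simp at hsum ⊢
      linarith
    field_simp at h1
    field_simp
    linarith
  have hβ2 : (2:ℝ) < β := by
    rw [hβ, lt_div_iff₀ hαm1]; linarith
  have hβpos : (0:ℝ) < β := by linarith
  have hβirr : Irrational β := by
    have h1 : Irrational (1 - α⁻¹) := by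
      have := ((hαirr.inv).ratCast_sub (q := 1))
      simpa using this
    have h2 : Irrational (1 - α⁻¹)⁻¹ := h1.inv
    have : β = (1 - α⁻¹)⁻¹ := by
      rw [hβ, show (1 - α⁻¹) = (α - 1)/α by field_simp, inv_div]
    rwa [← this] at h2
  -- strict monotonicity of k ↦ ⌊kβ⌋ on ℤ
  set f : ℤ → ℤ := fun j => ⌊(j:ℝ) * β⌋ with hf
  have hmono : StrictMono f := by
    intro j k hjk
    have h1 : ((j:ℝ) + 1) * β ≤ (k:ℝ) * β := by
      apply mul_le_mul_of_nonneg_right _ (le_of_lt hβpos)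
      have : (j:ℝ) + 1 ≤ (k:ℝ) := by exact_mod_cast hjk
      linarith
    have h2 : ((f j : ℝ) + 1) ≤ (k:ℝ) * β := by
      have := Int.floor_le ((j:ℝ) * β)
      simp only [hf]
      push_cast
      nlinarith
    have : (f j + 1 : ℤ) ≤ f k := by
      apply Int.le_floor.2
      push_cast
      exact h2
    omega
  use 2 - α
  refine ⟨by linarith, by linarith, ?_⟩
  intro n hn
  have hnR : (1:ℝ) ≤ (n:ℝ) := by exact_mod_cast hn
  have hnα_irr : Irrational ((n:ℝ) * α) := hαirr.natCast_mul hn.ne'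
  -- floor comparisons for a n
  have han_le : (a n : ℝ) ≤ (n:ℝ) * α := by rw [ha n]; exact Int.floor_le _
  have han_lt : (n:ℝ) * α < (a n : ℝ) + 1 := by
    rw [ha n]; exact Int.lt_floor_add_one _
  have han_ne : (n:ℝ) * α ≠ (a n : ℝ) := fun h => hnα_irr.ne_int (a n) h
  have han_slt : (a n : ℝ) < (n:ℝ) * α := lt_of_le_of_ne han_le (fun h => han_ne h.symm)
  have han_ge_n : (n:ℤ) ≤ a n := by
    rw [ha n]
    apply Int.le_floor.2
    push_cast
    nlinarith
  have hb_eq : b (n - 1) = f ((n:ℤ) - 1) := by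
    rw [hb (n-1), hf]
    congr 1
    congr 1
    push_cast [Nat.cast_sub hn]
    ring
  -- the set is the image of an interval
  have hset : {m : ℤ | (∃ k : ℕ, 0 < k ∧ m = ⌊(k : ℝ) * β⌋) ∧
        a n < m ∧ m ≤ b (n - 1)} =
      ↑((Finset.Ioc (a n - n) ((n:ℤ) - 1)).image f) := by
    ext m
    simp only [Set.mem_setOf_eq, Finset.coe_image, Set.mem_image, Finset.mem_coe,
      Finset.mem_Ioc]
    constructor
    · rintro ⟨⟨k, hk0, hmk⟩, hlo, hhi⟩
      refine ⟨(k:ℤ), ⟨?_, ?_⟩, ?_⟩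
      · -- a n - n < k
        have hkβ_irr : Irrational ((k:ℝ) * β) := hβirr.natCast_mul hk0.ne'
        have h1 : (a n : ℝ) + 1 ≤ (k:ℝ) * β := by
          have : a n + 1 ≤ m := hlo
          rw [hmk] at this
          have := Int.le_floor.1 this
          push_cast at this ⊢
          linarith
        have h2 : (a n : ℝ) + 1 ≠ (k:ℝ) * β := fun h => hkβ_irr.ne_int (a n + 1) (by push_cast; linarith)
        have h3 : (a n : ℝ) + 1 < (k:ℝ) * β := lt_of_le_of_ne h1 h2
        have h4 : ((a n : ℝ) - n) * β ≤ (a n : ℝ) + 1 := by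
          rw [hβ, div_eq_mul_inv, ← mul_assoc, ← div_eq_mul_inv, div_le_iff₀ hαm1]
          nlinarith
        have h5 : ((a n : ℝ) - n) * β < (k:ℝ) * β := lt_of_le_of_lt h4 h3
        have h6 : (a n : ℝ) - n < (k:ℝ) := lt_of_mul_lt_mul_right (by linarith) (le_of_lt hβpos)
        exact_mod_cast h6
      · -- k ≤ n - 1
        have : f (k:ℤ) ≤ f ((n:ℤ) - 1) := by
          rw [← hb_eq]
          have : m ≤ b (n-1) := hhi
          rw [hmk] at this
          simpa [hf] using this
        exact (hmono.le_iff_le).1 this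
      · rw [hmk]; simp [hf]
    · rintro ⟨k, ⟨hk1, hk2⟩, hmk⟩
      have hk_pos : 0 < k := by omega
      refine ⟨⟨k.toNat, by omega, ?_⟩, ?_, ?_⟩
      · rw [← hmk]
        have hkk : ((k.toNat : ℕ) : ℝ) = ((k : ℤ) : ℝ) := by
          rw [← Int.cast_natCast, Int.toNat_of_nonneg hk_pos.le]
        simp only [hf, hkk]
      · -- a n < m
        rw [← hmk]
        have h1 : ((a n : ℝ) - n + 1) * β ≤ (k:ℝ) * β := by
          apply mul_le_mul_of_nonneg_right _ hβpos.le
          have : (a n : ℝ) - n + 1 ≤ (k:ℝ) := by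
            have : a n - n + 1 ≤ k := by omega
            exact_mod_cast this
          linarith
        have h2 : (a n : ℝ) + 1 ≤ ((a n : ℝ) - n + 1) * β := by
          rw [hβ, div_eq_mul_inv, ← mul_assoc, ← div_eq_mul_inv, le_div_iff₀ hαm1]
          nlinarith
        have h7 : a n + 1 ≤ ⌊(k:ℝ) * β⌋ := by
          apply Int.le_floor.2
          push_cast
          linarith
        rw [show f k = ⌊(k:ℝ) * β⌋ from rfl]
        omega
      · rw [← hmk, hb_eq]
        exact hmono.monotone (by omega)
  have hcard : r n = ((Finset.Ioc (a n - n) ((n:ℤ) - 1)).image f).card := by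
    rw [hr n, hset, Set.ncard_coe_finset]
  have hcard2 : ((Finset.Ioc (a n - n) ((n:ℤ) - 1)).image f).card
      = (Finset.Ioc (a n - n) ((n:ℤ) - 1)).card :=
    Finset.card_image_of_injective _ hmono.injective
  have han_le2 : a n ≤ 2 * n - 1 := by
    have : a n < 2 * (n:ℤ) := by
      rw [ha n]
      apply Int.floor_lt.2
      push_cast
      nlinarith
    omega
  have hrn : (r n : ℤ) = 2 * n - 1 - a n := by
    rw [hcard, hcard2, Int.card_Ioc]
    have : ((n:ℤ) - 1 - (a n - n)).toNat = (2 * n - 1 - a n).toNat := by ring_nf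
    rw [this, Int.toNat_of_nonneg (by omega)]
  rw [hrn]
  symm
  rw [Int.floor_eq_iff]
  constructor
  · push_cast
    linarith
  · push_cast
    linarith
end

section
/- Let k be a positive integer and let α be irrational with (2k − 1)/k < α < (2k + 1)/(k + 1). Set c = (2 − α)/(α − 1) and δ = (2 − α)/(kα − 2k + 1). Then for every positive integer m, the number of positive integers n with ⌊cn⌋ = m equals k if m ∈ {⌊nδ⌋ : n ≥ 1}, and equals k − 1 otherwise. -/
/-- Counting lemma: a set of naturals characterized by integer bounds `a < n ≤ b`
with `0 ≤ a` has cardinality `(b - a).toNat`. -/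
lemma ncard_nat_of_int_bounds (a b : ℤ) (ha : 0 ≤ a) (S : Set ℕ)
    (hS : ∀ n : ℕ, n ∈ S ↔ a < (n : ℤ) ∧ (n : ℤ) ≤ b) :
    S.ncard = (b - a).toNat := by
  have himg : S = Int.toNat '' (Set.Ioc a b) := by
    ext n
    simp only [Set.mem_image, Set.mem_Ioc, hS]
    constructor
    · rintro ⟨h1, h2⟩
      exact ⟨(n : ℤ), ⟨h1, h2⟩, Int.toNat_natCast n⟩
    · rintro ⟨z, ⟨hz1, hz2⟩, rfl⟩
      have hz0 : 0 ≤ z := le_of_lt (lt_of_le_of_lt ha hz1)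
      rw [Int.toNat_of_nonneg hz0]
      exact ⟨hz1, hz2⟩
  rw [himg]
  rw [Set.ncard_image_of_injOn]
  · rw [← Finset.coe_Ioc, Set.ncard_coe_finset, Int.card_Ioc]
  · intro x hx y hy hxy
    have hx0 : 0 ≤ x := le_of_lt (lt_of_le_of_lt ha hx.1)
    have hy0 : 0 ≤ y := le_of_lt (lt_of_le_of_lt ha hy.1)
    rw [← Int.toNat_of_nonneg hx0, ← Int.toNat_of_nonneg hy0, hxy]

theorem skipping_sequence_multiplicity
    (k : ℕ) (hk : 0 < k) (α : ℝ) (hαirr : Irrational α)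
    (hα1 : (2 * (k : ℝ) - 1) / (k : ℝ) < α)
    (hα2 : α < (2 * (k : ℝ) + 1) / ((k : ℝ) + 1))
    (c δ : ℝ) (hc : c = (2 - α) / (α - 1))
    (hδ : δ = (2 - α) / ((k : ℝ) * α - 2 * (k : ℝ) + 1)) :
    ∀ m : ℤ, 0 < m →
      ((∃ n : ℕ, 0 < n ∧ m = ⌊(n : ℝ) * δ⌋) →
        {n : ℕ | 0 < n ∧ ⌊(n : ℝ) * c⌋ = m}.ncard = k) ∧
      (¬ (∃ n : ℕ, 0 < n ∧ m = ⌊(n : ℝ) * δ⌋) →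
        {n : ℕ | 0 < n ∧ ⌊(n : ℝ) * c⌋ = m}.ncard = k - 1) := by
  have hk1 : (1 : ℝ) ≤ (k : ℝ) := by exact_mod_cast hk
  have hkpos : (0 : ℝ) < (k : ℝ) := by linarith
  -- basic bounds on α
  have hα1' : 2 * (k : ℝ) - 1 < (k : ℝ) * α := by
    have := (div_lt_iff₀ hkpos).mp hα1
    linarith
  have hα2' : α * ((k : ℝ) + 1) < 2 * (k : ℝ) + 1 := by
    have := (lt_div_iff₀ (by linarith : (0:ℝ) < (k:ℝ) + 1)).mp hα2
    linarith
  have hαgt1 : 1 < α := by nlinarith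
  have hαlt2 : α < 2 := by nlinarith
  have hnum : 0 < (k : ℝ) * α - 2 * (k : ℝ) + 1 := by linarith
  have h2α : 0 < 2 - α := by linarith
  have hα1p : 0 < α - 1 := by linarith
  have hcpos : 0 < c := by rw [hc]; positivity
  have hδpos : 0 < δ := by rw [hδ]; positivity
  have hδgt1 : 1 < δ := by
    rw [hδ]
    rw [lt_div_iff₀ hnum]
    nlinarith
  -- irrationality of c and δ
  have hcirr : Irrational c := by
    have h1 : Irrational (α - 1) := by simpa using hαirr.sub_intCast 1
    have h2 : Irrational ((α - 1)⁻¹ - 1) := by simpa using (h1.inv).sub_intCast 1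
    have : c = (α - 1)⁻¹ - 1 := by
      rw [hc]; field_simp; ring
    rwa [this]
  have hciinv : c⁻¹ = ((k : ℝ) - 1) + δ⁻¹ := by
    rw [hc, hδ]
    rw [inv_div, inv_div]
    field_simp
    ring
  have hδirr : Irrational δ := by
    have h1 : Irrational c⁻¹ := hcirr.inv
    have h2 : Irrational (c⁻¹ - (((k : ℤ) - 1) : ℤ)) := h1.sub_intCast _
    have h3 : Irrational δ⁻¹ := by
      have : δ⁻¹ = c⁻¹ - (((k : ℤ) - 1) : ℤ) := by push_cast; linarith [hciinv]
      rwa [this]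
    exact h3.of_inv
  intro m hm
  -- the key quantities
  set a : ℤ := ⌊(m : ℝ) / c⌋ with ha_def
  set b : ℤ := ⌊((m : ℝ) + 1) / c⌋ with hb_def
  set u : ℤ := ⌊(m : ℝ) / δ⌋ with hu_def
  set v : ℤ := ⌊((m : ℝ) + 1) / δ⌋ with hv_def
  have hmR : (0 : ℝ) < (m : ℝ) := by exact_mod_cast hm
  have ha0 : 0 ≤ a := Int.floor_nonneg.2 (by positivity)
  -- irrationality of m/c, (m+1)/c, m/δ, (m+1)/δ
  have hmc_irr : Irrational ((m : ℝ) / c) := by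
    have := (hcirr.inv).intCast_mul (m := m) (by omega)
    have heq : (m : ℝ) / c = (m : ℝ) * c⁻¹ := div_eq_mul_inv _ _
    rwa [heq]
  have hm1c_irr : Irrational (((m : ℝ) + 1) / c) := by
    have := (hcirr.inv).intCast_mul (m := m + 1) (by omega)
    have heq : ((m : ℝ) + 1) / c = ((m + 1 : ℤ) : ℝ) * c⁻¹ := by
      push_cast; rw [div_eq_mul_inv]
    rwa [heq]
  have hmδ_irr : Irrational ((m : ℝ) / δ) := by
    have := (hδirr.inv).intCast_mul (m := m) (by omega)
    have heq : (m : ℝ) / δ = (m : ℝ) * δ⁻¹ := div_eq_mul_inv _ _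
    rwa [heq]
  have hm1δ_irr : Irrational (((m : ℝ) + 1) / δ) := by
    have := (hδirr.inv).intCast_mul (m := m + 1) (by omega)
    have heq : ((m : ℝ) + 1) / δ = ((m + 1 : ℤ) : ℝ) * δ⁻¹ := by
      push_cast; rw [div_eq_mul_inv]
    rwa [heq]
  -- membership characterization
  have hmem : ∀ n : ℕ, (n ∈ {n : ℕ | 0 < n ∧ ⌊(n : ℝ) * c⌋ = m}) ↔
      a < (n : ℤ) ∧ (n : ℤ) ≤ b := by
    intro n
    simp only [Set.mem_setOf_eq]
    constructor
    · rintro ⟨hn, hfl⟩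
      have h1 : (m : ℝ) ≤ (n : ℝ) * c := by
        rw [← hfl]; exact_mod_cast Int.floor_le ((n : ℝ) * c)
      have h2 : (n : ℝ) * c < (m : ℝ) + 1 := by
        have := Int.lt_floor_add_one ((n : ℝ) * c)
        rw [hfl] at this; exact_mod_cast this
      have h1' : (m : ℝ) / c ≤ (n : ℝ) := (div_le_iff₀ hcpos).2 h1
      have h1'' : (m : ℝ) / c < (n : ℝ) :=
        lt_of_le_of_ne h1' (by
          intro h; exact hmc_irr.ne_nat n h)
      have h2' : (n : ℝ) < ((m : ℝ) + 1) / c := (lt_div_iff₀ hcpos).2 h2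
      constructor
      · exact Int.floor_lt.2 (by exact_mod_cast h1'')
      · exact Int.le_floor.2 (le_of_lt (by exact_mod_cast h2'))
    · rintro ⟨h1, h2⟩
      have hn : 0 < n := by
        by_contra h
        push_neg at h
        interval_cases n
        · simp at h1; omega
      refine ⟨hn, ?_⟩
      have h1' : (m : ℝ) / c < (n : ℝ) := by
        have := Int.floor_lt.1 h1; exact_mod_cast this
      have h2' : (n : ℝ) ≤ ((m : ℝ) + 1) / c := by
        have h := Int.le_floor.1 h2
        exact_mod_cast h
      have h2'' : (n : ℝ) < ((m : ℝ) + 1) / c :=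
        lt_of_le_of_ne h2' (fun h => hm1c_irr.ne_nat n h.symm)
      have hA : (m : ℝ) ≤ (n : ℝ) * c := le_of_lt ((div_lt_iff₀ hcpos).1 h1')
      have hB : (n : ℝ) * c < (m : ℝ) + 1 := (lt_div_iff₀ hcpos).1 h2''
      rw [Int.floor_eq_iff]
      constructor
      · exact_mod_cast hA
      · exact_mod_cast hB
  -- express a, b via u, v
  have hfloor_a : a = m * ((k : ℤ) - 1) + u := by
    have heq : (m : ℝ) / c = ((m * ((k : ℤ) - 1) : ℤ) : ℝ) + (m : ℝ) / δ := by
      rw [div_eq_mul_inv, div_eq_mul_inv, hciinv]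
      push_cast; ring
    rw [ha_def, heq, Int.floor_intCast_add]
  have hfloor_b : b = (m + 1) * ((k : ℤ) - 1) + v := by
    have heq : ((m : ℝ) + 1) / c = (((m + 1) * ((k : ℤ) - 1) : ℤ) : ℝ) + ((m : ℝ) + 1) / δ := by
      rw [div_eq_mul_inv, div_eq_mul_inv, hciinv]
      push_cast; ring
    rw [hb_def, heq, Int.floor_intCast_add]
  have hba : b - a = ((k : ℤ) - 1) + (v - u) := by rw [hfloor_a, hfloor_b]; ring
  -- u ≤ v ≤ u + 1
  have huv : u ≤ v := Int.floor_le_floor (by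
    have : (0:ℝ) < δ := hδpos
    gcongr
    linarith)
  have hvu1 : v ≤ u + 1 := by
    have h1 : ((m : ℝ) + 1) / δ ≤ (m : ℝ) / δ + 1 := by
      rw [div_add' _ _ _ (ne_of_gt hδpos)]
      gcongr
      linarith
    calc v ≤ ⌊(m : ℝ) / δ + 1⌋ := Int.floor_le_floor h1
      _ = u + 1 := by rw [Int.floor_add_one]
  -- the equivalence: v = u + 1 ↔ m is in the Beatty sequence of δ
  have hbeatty : (∃ n : ℕ, 0 < n ∧ m = ⌊(n : ℝ) * δ⌋) ↔ v = u + 1 := by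
    constructor
    · rintro ⟨n, hn, hmn⟩
      have hnδ_irr : Irrational ((n : ℝ) * δ) := hδirr.natCast_mul (by omega)
      have h1 : (m : ℝ) ≤ (n : ℝ) * δ := by
        rw [hmn]; exact_mod_cast Int.floor_le _
      have h1' : (m : ℝ) < (n : ℝ) * δ :=
        lt_of_le_of_ne h1 (fun h => hnδ_irr.ne_int m h.symm)
      have h2 : (n : ℝ) * δ < (m : ℝ) + 1 := by
        have := Int.lt_floor_add_one ((n : ℝ) * δ)
        rw [← hmn] at this; exact_mod_cast this
      have hA : (m : ℝ) / δ < (n : ℝ) := (div_lt_iff₀ hδpos).2 h1'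
      have hB : (n : ℝ) ≤ ((m : ℝ) + 1) / δ := (le_div_iff₀ hδpos).2 (le_of_lt h2)
      have hun : u < (n : ℤ) := Int.floor_lt.2 (by exact_mod_cast hA)
      have hnv : (n : ℤ) ≤ v := Int.le_floor.2 (by exact_mod_cast hB)
      omega
    · intro hv1
      have hun : (m : ℝ) / δ < (v : ℝ) := by
        have : u < v := by omega
        have := Int.floor_lt.1 this
        exact_mod_cast this
      have hvb : (v : ℝ) ≤ ((m : ℝ) + 1) / δ := Int.floor_le _
      have hvpos : 0 < v := by
        by_contra h
        push_neg at h
        have : (v : ℝ) ≤ 0 := by exact_mod_cast h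
        have : (m : ℝ) / δ < 0 := lt_of_lt_of_le hun this
        have : (0:ℝ) < (m : ℝ) / δ := by positivity
        linarith
      have hvδ_irr : Irrational ((v : ℝ) * δ) := hδirr.intCast_mul (by omega)
      have h1 : (m : ℝ) < (v : ℝ) * δ := (div_lt_iff₀ hδpos).1 hun
      have h2 : (v : ℝ) * δ ≤ (m : ℝ) + 1 := (le_div_iff₀ hδpos).1 hvb
      have h2' : (v : ℝ) * δ < (m : ℝ) + 1 :=
        lt_of_le_of_ne h2 (by
          intro h
          have : ((v : ℝ)) * δ = ((m + 1 : ℤ) : ℝ) := by push_cast; linarith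
          exact hvδ_irr.ne_int _ this)
      refine ⟨v.toNat, by omega, ?_⟩
      have hvt : ((v.toNat : ℕ) : ℝ) = (v : ℝ) := by
        exact_mod_cast Int.toNat_of_nonneg hvpos.le
      rw [hvt]
      symm
      rw [Int.floor_eq_iff]
      constructor
      · exact_mod_cast h1.le
      · exact_mod_cast h2'
  have hcard := ncard_nat_of_int_bounds a b ha0 _ hmem
  constructor
  · intro hex
    rw [hcard, hba, (hbeatty.1 hex)]
    simp only [show ((k : ℤ) - 1) + (u + 1 - u) = (k : ℤ) by ring]
    omega
  · intro hnex
    have hvu : v = u := by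
      rcases eq_or_lt_of_le huv with h | h
      · exact h.symm
      · exact absurd (hbeatty.2 (by omega)) hnex
    rw [hcard, hba, hvu]
    omega
end

section
/- Let k be a positive integer and set α = (k − 1 + √(k² + 1))/k and c = (2 − α)/(α − 1). Then for every positive integer m, the number of positive integers n with ⌊cn⌋ = m equals k if m ∈ {⌊nα⌋ : n ≥ 1}, and equals k − 1 otherwise. -/
set_option maxHeartbeats 1000000 in
theorem mes_self_defining_multiplicity
    (k : ℕ) (hk : 0 < k) (α c : ℝ)
    (hα : α = ((k : ℝ) - 1 + Real.sqrt ((k : ℝ) ^ 2 + 1)) / (k : ℝ))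
    (hc : c = (2 - α) / (α - 1)) :
    ∀ m : ℤ, 0 < m →
      ((∃ n : ℕ, 0 < n ∧ m = ⌊(n : ℝ) * α⌋) →
        {n : ℕ | 0 < n ∧ ⌊(n : ℝ) * c⌋ = m}.ncard = k) ∧
      (¬ (∃ n : ℕ, 0 < n ∧ m = ⌊(n : ℝ) * α⌋) →
        {n : ℕ | 0 < n ∧ ⌊(n : ℝ) * c⌋ = m}.ncard = k - 1) := by
  have hk0 : (0:ℝ) < k := by exact_mod_cast hk
  have hk1 : (1:ℝ) ≤ k := by exact_mod_cast hk
  set s := Real.sqrt ((k : ℝ) ^ 2 + 1) with hs_def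
  have hs2 : s ^ 2 = (k:ℝ)^2 + 1 := Real.sq_sqrt (by positivity)
  have hs0 : 0 ≤ s := Real.sqrt_nonneg _
  have hks : (k:ℝ) < s := by nlinarith
  have hsk1 : s < (k:ℝ) + 1 := by nlinarith
  have hsirr : Irrational s := by
    have hcast : ((k:ℝ)^2 + 1) = ((k^2 + 1 : ℕ) : ℝ) := by push_cast; ring
    rw [hs_def, hcast, show Real.sqrt _ = √(k^2+1 : ℕ) from rfl]
    rw [irrational_sqrt_natCast_iff]
    rintro ⟨r, hr⟩
    have h1 : k < r := by nlinarith
    have h2 : r < k + 1 := by nlinarith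
    omega
  have hα1 : 1 < α := by
    rw [hα, lt_div_iff₀ hk0]; nlinarith
  have hα2 : α < 2 := by
    rw [hα, div_lt_iff₀ hk0]; nlinarith
  have hα0 : 0 < α := by linarith
  have hαirr : Irrational α := by
    have h := (hsirr.ratCast_add ((k:ℚ) - 1)).div_ratCast (q := (k:ℚ))
      (by exact_mod_cast hk.ne')
    rw [hα]
    convert h using 1
    push_cast; ring
  have hquad : (k:ℝ) * α ^ 2 = 2 * ((k:ℝ) - 1) * α + 2 := by
    rw [hα]; field_simp; nlinarith
  set γ : ℝ := (k:ℝ) - 1 + 1/α with hγ_def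
  have hkey : γ = (α - 1) / (2 - α) := by
    rw [hγ_def, eq_div_iff (by linarith)]
    field_simp
    nlinarith
  have hcγ : c * γ = 1 := by
    rw [hc, hkey, div_mul_div_comm, mul_comm]
    exact div_self (mul_ne_zero (by linarith) (by linarith))
  have hγ0 : 0 < γ := by
    rw [hkey]; exact div_pos (by linarith) (by linarith)
  have hc0 : 0 < c := by
    rw [hc]; exact div_pos (by linarith) (by linarith)
  have hγirr : Irrational γ := by
    have h := hαirr.inv.intCast_add ((k:ℤ) - 1)
    rw [hγ_def]
    convert h using 1
    push_cast; ring
  intro m hm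
  -- floors of m/α and (m+1)/α
  set e : ℤ := ⌊(m:ℝ) * (1/α)⌋ with he_def
  set f : ℤ := ⌊((m:ℝ) + 1) * (1/α)⌋ with hf_def
  have h1α0 : 0 < 1/α := by positivity
  have hm0R : (0:ℝ) < m := by exact_mod_cast hm
  have he0 : 0 ≤ e := Int.floor_nonneg.2 (by positivity)
  have hef : e ≤ f := Int.floor_le_floor (by nlinarith)
  have hfe1 : f ≤ e + 1 := by
    have h1 : ((m:ℝ) + 1) * (1/α) < (m:ℝ) * (1/α) + 1 := by
      have : 1/α < 1 := by rw [div_lt_one hα0]; exact hα1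
      nlinarith
    calc f ≤ ⌊(m:ℝ) * (1/α) + 1⌋ := Int.floor_le_floor h1.le
      _ = e + 1 := by rw [Int.floor_add_one]
  -- floors of mγ and (m+1)γ
  set a : ℤ := ⌊(m:ℝ) * γ⌋ with ha_def
  set b : ℤ := ⌊((m:ℝ) + 1) * γ⌋ with hb_def
  have hmγeq : (m:ℝ) * γ = (m:ℝ) * (1/α) + ((m * ((k:ℤ)-1) : ℤ) : ℝ) := by
    rw [hγ_def]; push_cast; ring
  have hm1γeq : ((m:ℝ)+1) * γ = ((m:ℝ)+1) * (1/α) + (((m+1) * ((k:ℤ)-1) : ℤ) : ℝ) := by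
    rw [hγ_def]; push_cast; ring
  have ha : a = e + m * ((k:ℤ) - 1) := by
    rw [ha_def, hmγeq, Int.floor_add_intCast, he_def]
  have hb : b = f + (m + 1) * ((k:ℤ) - 1) := by
    rw [hb_def, hm1γeq, Int.floor_add_intCast, hf_def]
  have hmγirr : Irrational ((m:ℝ) * γ) := hγirr.intCast_mul hm.ne'
  have hm1γirr : Irrational (((m:ℝ) + 1) * γ) := by
    have h := hγirr.intCast_mul (m := m + 1) (by omega)
    convert h using 2; push_cast; ring
  -- the set is an interval
  have hset : {n : ℕ | 0 < n ∧ ⌊(n : ℝ) * c⌋ = m} = ↑(Finset.Ioc a.toNat b.toNat) := by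
    ext n
    simp only [Set.mem_setOf_eq, Finset.coe_Ioc, Set.mem_Ioc]
    constructor
    · rintro ⟨hn, hfl⟩
      have h1 : (m:ℝ) ≤ n * c := by
        rw [← hfl]; exact Int.floor_le _
      have h2 : (n:ℝ) * c < m + 1 := by
        rw [← hfl]; push_cast; exact Int.lt_floor_add_one _
      have h3 : (m:ℝ) * γ ≤ n := by
        have := mul_le_mul_of_nonneg_right h1 hγ0.le
        rwa [mul_assoc, hcγ, mul_one] at this
      have h4 : (n:ℝ) ≤ ((m:ℝ) + 1) * γ := by
        have := mul_le_mul_of_nonneg_right h2.le hγ0.le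
        rwa [mul_assoc, hcγ, mul_one] at this
      have h3' : (m:ℝ) * γ < n := lt_of_le_of_ne h3 (by
        intro hcon; exact (hmγirr.ne_nat n) hcon)
      have h5 : a < (n:ℤ) := by
        rw [ha_def, Int.floor_lt]; push_cast; exact h3'
      have h6 : (n:ℤ) ≤ b := by
        rw [hb_def, Int.le_floor]; push_cast; exact h4
      omega
    · rintro ⟨hn1, hn2⟩
      have hn : 0 < n := by omega
      have h5 : a < (n:ℤ) := by omega
      have h6 : (n:ℤ) ≤ b := by omega
      refine ⟨hn, ?_⟩
      have h3 : (m:ℝ) * γ < n := by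
        have := Int.floor_lt.mp h5
        exact_mod_cast this
      have h4 : (n:ℝ) ≤ ((m:ℝ) + 1) * γ := by
        have := Int.le_floor.mp h6
        exact_mod_cast this
      have h4' : (n:ℝ) < ((m:ℝ) + 1) * γ := lt_of_le_of_ne (by exact h4) (by
        intro hcon; exact (hm1γirr.ne_nat n) hcon.symm)
      rw [Int.floor_eq_iff]
      constructor
      · have h := mul_lt_mul_of_pos_right h3 hc0
        rw [mul_assoc, mul_comm γ c, hcγ, mul_one] at h
        exact h.le
      · have h := mul_lt_mul_of_pos_right h4' hc0
        rw [mul_assoc, mul_comm γ c, hcγ, mul_one] at h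
        push_cast
        exact h
  have hcard : {n : ℕ | 0 < n ∧ ⌊(n : ℝ) * c⌋ = m}.ncard = b.toNat - a.toNat := by
    rw [hset, Set.ncard_coe_finset, Nat.card_Ioc]
  constructor
  · rintro ⟨n, hn, hmn⟩
    -- m is in the Beatty sequence, so f - e = 1
    have hnαirr : Irrational ((n:ℝ) * α) := hαirr.natCast_mul hn.ne'
    have h1 : (m:ℝ) ≤ n * α := by rw [hmn]; exact Int.floor_le _
    have h2 : (n:ℝ) * α < m + 1 := by
      rw [hmn]; push_cast; exact Int.lt_floor_add_one _
    have h1' : (m:ℝ) < n * α := lt_of_le_of_ne h1 (by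
      intro hcon; exact hnαirr.ne_int m hcon.symm)
    have h3 : (m:ℝ) * (1/α) < n := by
      rw [mul_one_div, div_lt_iff₀ hα0]; exact h1'
    have h4 : (n:ℝ) ≤ ((m:ℝ) + 1) * (1/α) := by
      rw [mul_one_div, le_div_iff₀ hα0]; linarith
    have h5 : e < (n:ℤ) := by rw [he_def, Int.floor_lt]; push_cast; exact h3
    have h6 : (n:ℤ) ≤ f := by rw [hf_def, Int.le_floor]; push_cast; exact h4
    have hd : f - e = 1 := by omega
    have hrel : (m+1)*((k:ℤ)-1) = m*((k:ℤ)-1) + ((k:ℤ)-1) := by ring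
    have hg0 : 0 ≤ m * ((k:ℤ)-1) := mul_nonneg hm.le (by push_cast; omega)
    rw [hcard]; omega
  · intro hne
    -- m is not in the Beatty sequence, so f = e
    have hd : f - e = 0 := by
      by_contra hcon
      have hef1 : e + 1 ≤ f := by omega
      apply hne
      have hf0 : 0 < f := by omega
      refine ⟨f.toNat, by omega, ?_⟩
      have hfc : ((f.toNat : ℕ) : ℝ) = (f:ℝ) := by
        exact_mod_cast Int.toNat_of_nonneg hf0.le
      have h3 : (m:ℝ) * (1/α) < f := by
        have := Int.floor_lt.mp (show e < f by omega)
        exact_mod_cast this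
      have h4 : (f:ℝ) ≤ ((m:ℝ) + 1) * (1/α) := Int.le_floor.mp le_rfl
      have h1 : (m:ℝ) < f * α := by
        rw [mul_one_div, div_lt_iff₀ hα0] at h3; linarith
      have h2 : (f:ℝ) * α ≤ (m:ℝ) + 1 := by
        rw [mul_one_div, le_div_iff₀ hα0] at h4; linarith
      have hfαirr : Irrational ((f:ℝ) * α) := hαirr.intCast_mul hf0.ne'
      have h2' : (f:ℝ) * α < (m:ℝ) + 1 := lt_of_le_of_ne h2 (by
        intro hcon2
        have heq : (f:ℝ)*α = ((m+1 : ℤ) : ℝ) := by push_cast; linarith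
        exact hfαirr.ne_int (m+1) heq)
      symm
      rw [Int.floor_eq_iff, hfc]
      exact ⟨h1.le, by push_cast; linarith⟩
    have hrel : (m+1)*((k:ℤ)-1) = m*((k:ℤ)-1) + ((k:ℤ)-1) := by ring
    have hg0 : 0 ≤ m * ((k:ℤ)-1) := mul_nonneg hm.le (by push_cast; omega)
    rw [hcard]; omega
end

section
/- Let α and β be irrational numbers with 1 < α < 2 and 1/α + 1/β = 1, and set a_n = ⌊nα⌋ and b_n = ⌊nβ⌋ for n ≥ 1, A = {⌊mα⌋ : m ≥ 1}, B = {⌊mβ⌋ : m ≥ 1}. Then for every positive integer n, b_n − a_n = ⌊((2 − α)/(α − 1))·n⌋ + ⌊(2 − α)n⌋ + 1, where the first summand equals the number of integers m ∈ A with a_n < m < b_n and the second equals the number of integers m ∈ B with a_n < m < b_n. -/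
private lemma floor_mul_strictMono {γ : ℝ} (hγ : 1 < γ) :
    StrictMono fun k : ℤ => ⌊(k : ℝ) * γ⌋ := by
  intro x y hxy
  simp only []
  have hx1 : (x : ℝ) + 1 ≤ (y : ℝ) := by exact_mod_cast hxy
  have h0 : (0 : ℝ) < γ := by linarith
  have hmul : ((x : ℝ) + 1) * γ ≤ (y : ℝ) * γ := mul_le_mul_of_nonneg_right hx1 h0.le
  have h1 : (⌊(x : ℝ) * γ⌋ : ℝ) ≤ (x : ℝ) * γ := Int.floor_le _
  have : ⌊(x : ℝ) * γ⌋ + 1 ≤ ⌊(y : ℝ) * γ⌋ := by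
    rw [Int.le_floor]
    push_cast
    nlinarith
  omega

private lemma beatty_disj {α β : ℝ} (hαirr : Irrational α) (hβirr : Irrational β)
    (hα : 0 < α) (hβ : 0 < β) (hsum : 1 / α + 1 / β = 1)
    (k n : ℤ) (hk : 0 < k) (hn : 0 < n) : ⌊(k : ℝ) * α⌋ ≠ ⌊(n : ℝ) * β⌋ := by
  intro h
  set m := ⌊(n : ℝ) * β⌋ with hm
  have hkirr : Irrational ((k : ℝ) * α) := hαirr.intCast_mul hk.ne'
  have hnirr : Irrational ((n : ℝ) * β) := hβirr.intCast_mul hn.ne'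
  have h1 : (m : ℝ) < (k : ℝ) * α := by
    have := Int.floor_le ((k : ℝ) * α)
    rw [h] at this
    exact lt_of_le_of_ne this (hkirr.ne_int m).symm
  have h2 : (k : ℝ) * α < m + 1 := by
    have := Int.lt_floor_add_one ((k : ℝ) * α)
    rwa [h] at this
  have h3 : (m : ℝ) < (n : ℝ) * β :=
    lt_of_le_of_ne (Int.floor_le _) (hnirr.ne_int m).symm
  have h4 : (n : ℝ) * β < m + 1 := Int.lt_floor_add_one _
  have hka : (m : ℝ) / α < k := by rw [div_lt_iff₀ hα]; linarith
  have hka' : (k : ℝ) < (m + 1) / α := by rw [lt_div_iff₀ hα]; linarith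
  have hnb : (m : ℝ) / β < n := by rw [div_lt_iff₀ hβ]; linarith
  have hnb' : (n : ℝ) < (m + 1) / β := by rw [lt_div_iff₀ hβ]; linarith
  have e1 : (m : ℝ) / α + (m : ℝ) / β = m := by
    have : (m : ℝ) / α + (m : ℝ) / β = m * (1 / α + 1 / β) := by ring
    rw [this, hsum, mul_one]
  have e2 : ((m : ℝ) + 1) / α + ((m : ℝ) + 1) / β = m + 1 := by
    have : ((m : ℝ) + 1) / α + ((m : ℝ) + 1) / β = (m + 1) * (1 / α + 1 / β) := by ring
    rw [this, hsum, mul_one]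
  have hl : (m : ℝ) < (k : ℝ) + n := by linarith
  have hr : (k : ℝ) + n < m + 1 := by linarith
  have hl' : m < k + n := by exact_mod_cast hl
  have hr' : k + n < m + 1 := by exact_mod_cast hr
  omega

set_option maxHeartbeats 1000000 in
theorem partial_decomposition_beatty
    (α β : ℝ) (hαirr : Irrational α) (hβirr : Irrational β)
    (hα1 : 1 < α) (hα2 : α < 2) (hsum : 1 / α + 1 / β = 1) :
    ∀ n : ℕ, 0 < n →
      ⌊(n : ℝ) * β⌋ - ⌊(n : ℝ) * α⌋ =
        ⌊((2 - α) / (α - 1)) * (n : ℝ)⌋ + ⌊(2 - α) * (n : ℝ)⌋ + 1 ∧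
      ⌊((2 - α) / (α - 1)) * (n : ℝ)⌋ =
        ({m : ℤ | (∃ k : ℕ, 0 < k ∧ m = ⌊(k : ℝ) * α⌋) ∧
            ⌊(n : ℝ) * α⌋ < m ∧ m < ⌊(n : ℝ) * β⌋}.ncard : ℤ) ∧
      ⌊(2 - α) * (n : ℝ)⌋ =
        ({m : ℤ | (∃ k : ℕ, 0 < k ∧ m = ⌊(k : ℝ) * β⌋) ∧
            ⌊(n : ℝ) * α⌋ < m ∧ m < ⌊(n : ℝ) * β⌋}.ncard : ℤ) := by
  intro n hn
  have hn1 : (1 : ℝ) ≤ (n : ℝ) := by exact_mod_cast hn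
  have hnz : (1 : ℤ) ≤ (n : ℤ) := by exact_mod_cast hn
  have hα0 : (0 : ℝ) < α := by linarith
  have hα0' : α ≠ 0 := hα0.ne'
  have hβ0 : β ≠ 0 := by simpa using hβirr.ne_int 0
  have hαβ : α * β = α + β := by field_simp at hsum; linarith
  have hkey2 : (β - 2) * (α - 1) = 2 - α := by linear_combination hαβ
  have hβ2 : 2 < β := by nlinarith
  have hβpos : (0 : ℝ) < β := by linarith
  have hfrac : (2 - α) / (α - 1) = β - 2 := by
    rw [eq_comm, eq_div_iff (by linarith : α - 1 ≠ 0)]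
    linear_combination hαβ
  have hnα : Irrational ((n : ℝ) * α) := hαirr.natCast_mul hn.ne'
  have hnβ : Irrational ((n : ℝ) * β) := hβirr.natCast_mul hn.ne'
  set a := ⌊(n : ℝ) * α⌋ with ha_def
  set b := ⌊(n : ℝ) * β⌋ with hb_def
  have ha_le : (a : ℝ) ≤ (n : ℝ) * α := Int.floor_le _
  have ha_lt : (a : ℝ) < (n : ℝ) * α := lt_of_le_of_ne ha_le (hnα.ne_int a).symm
  have ha_lt1 : (n : ℝ) * α < a + 1 := Int.lt_floor_add_one _
  have hb_le : (b : ℝ) ≤ (n : ℝ) * β := Int.floor_le _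
  have hb_lt : (b : ℝ) < (n : ℝ) * β := lt_of_le_of_ne hb_le (hnβ.ne_int b).symm
  have hb_lt1 : (n : ℝ) * β < b + 1 := Int.lt_floor_add_one _
  -- key real identities
  have hkeyA : α * ((n : ℝ) * β - n) = (n : ℝ) * β := by linear_combination (n : ℝ) * hαβ
  have hkeyB : β * ((n : ℝ) * α - n) = (n : ℝ) * α := by linear_combination (n : ℝ) * hαβ
  -- the two floor computations
  have hfloor1 : ⌊((2 - α) / (α - 1)) * (n : ℝ)⌋ = b - 2 * n := by
    rw [hfrac]
    have : (β - 2) * (n : ℝ) = (n : ℝ) * β - ((2 * (n : ℤ) : ℤ) : ℝ) := by push_cast; ring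
    rw [this, Int.floor_sub_intCast, ← hb_def]
  have hfloor2 : ⌊(2 - α) * (n : ℝ)⌋ = 2 * n - a - 1 := by
    rw [Int.floor_eq_iff]
    constructor
    · push_cast; nlinarith
    · push_cast; nlinarith
  refine ⟨by rw [hfloor1, hfloor2]; ring, ?_, ?_⟩
  · -- count of A-elements
    have hSA : {m : ℤ | (∃ k : ℕ, 0 < k ∧ m = ⌊(k : ℝ) * α⌋) ∧ a < m ∧ m < b} =
        ↑((Finset.Ioc (n : ℤ) (b - n)).image fun k : ℤ => ⌊(k : ℝ) * α⌋) := by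
      ext m
      simp only [Finset.coe_image, Set.mem_image, Finset.mem_coe, Finset.mem_Ioc,
        Set.mem_setOf_eq]
      constructor
      · rintro ⟨⟨k, hk0, rfl⟩, h1, h2⟩
        refine ⟨(k : ℤ), ⟨?_, ?_⟩, by norm_cast⟩
        · by_contra hle
          push_neg at hle
          have hcast : ((k : ℕ) : ℝ) ≤ (n : ℝ) := by exact_mod_cast hle
          have : ((k : ℕ) : ℝ) * α ≤ (n : ℝ) * α := mul_le_mul_of_nonneg_right hcast hα0.le
          have := Int.floor_le_floor this
          omega
        · have hfl : (⌊((k : ℕ) : ℝ) * α⌋ : ℝ) + 1 ≤ (b : ℝ) := by exact_mod_cast h2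
          have hfl2 := Int.lt_floor_add_one (((k : ℕ) : ℝ) * α)
          have hkαlt : ((k : ℕ) : ℝ) * α < (n : ℝ) * β := by linarith
          have hk2 : ((k : ℕ) : ℝ) < (n : ℝ) * β - (n : ℝ) :=
            (mul_lt_mul_iff_right₀ hα0).1 (by linarith)
          have : ((k : ℤ) : ℝ) + (n : ℝ) ≤ (n : ℝ) * β := by push_cast; linarith
          have : (k : ℤ) + (n : ℤ) ≤ b := by
            rw [hb_def, Int.le_floor]; push_cast; push_cast at this; linarith
          omega
      · rintro ⟨k, ⟨hk1, hk2⟩, rfl⟩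
        have hk0 : 0 < k := by omega
        have hcastk : ((k.toNat : ℕ) : ℝ) = ((k : ℤ) : ℝ) := by
          exact_mod_cast Int.toNat_of_nonneg hk0.le
        refine ⟨⟨k.toNat, by omega, by rw [hcastk]⟩, ?_, ?_⟩
        · have hcast : (n : ℝ) + 1 ≤ (k : ℝ) := by exact_mod_cast hk1
          have hmul : ((n : ℝ) + 1) * α ≤ (k : ℝ) * α :=
            mul_le_mul_of_nonneg_right hcast hα0.le
          have : a + 1 ≤ ⌊(k : ℝ) * α⌋ := by
            rw [Int.le_floor]; push_cast; nlinarith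
          omega
        · have hkr : (k : ℝ) < (n : ℝ) * β - n := by
            have : (k : ℝ) ≤ ((b : ℝ) - n) := by exact_mod_cast hk2
            linarith
          have hmul := mul_lt_mul_of_pos_left hkr hα0
          have hkαlt : (k : ℝ) * α < (n : ℝ) * β := by nlinarith
          have hle : ⌊(k : ℝ) * α⌋ ≤ b := by
            rw [hb_def]; exact Int.floor_le_floor hkαlt.le
          have hne : ⌊(k : ℝ) * α⌋ ≠ b := by
            rw [hb_def]
            have := beatty_disj hαirr hβirr hα0 hβpos hsum k ((n : ℕ) : ℤ) hk0
              (by exact_mod_cast hn)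
            simpa using this
          omega
    rw [hfloor1, hSA, Set.ncard_coe_finset,
      Finset.card_image_of_injOn ((floor_mul_strictMono hα1).injective.injOn),
      Int.card_Ioc]
    have hb2n : 2 * (n : ℤ) ≤ b := by
      rw [hb_def, Int.le_floor]; push_cast; nlinarith
    omega
  · -- count of B-elements
    have hSB : {m : ℤ | (∃ k : ℕ, 0 < k ∧ m = ⌊(k : ℝ) * β⌋) ∧ a < m ∧ m < b} =
        ↑((Finset.Ioc (a - n) ((n : ℤ) - 1)).image fun k : ℤ => ⌊(k : ℝ) * β⌋) := by
      ext m
      simp only [Finset.coe_image, Set.mem_image, Finset.mem_coe, Finset.mem_Ioc,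
        Set.mem_setOf_eq]
      constructor
      · rintro ⟨⟨k, hk0, rfl⟩, h1, h2⟩
        refine ⟨(k : ℤ), ⟨?_, ?_⟩, by norm_cast⟩
        · have hfl : (a : ℝ) + 1 ≤ (⌊((k : ℕ) : ℝ) * β⌋ : ℝ) := by exact_mod_cast h1
          have hfl2 : (⌊((k : ℕ) : ℝ) * β⌋ : ℝ) ≤ ((k : ℕ) : ℝ) * β := Int.floor_le _
          have hkβgt : (n : ℝ) * α < ((k : ℕ) : ℝ) * β := by linarith
          have hk2 : (n : ℝ) * α - (n : ℝ) < ((k : ℕ) : ℝ) :=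
            (mul_lt_mul_iff_right₀ hβpos).1 (by linarith)
          have : ((a : ℝ) - n) < ((k : ℕ) : ℝ) := by linarith
          exact_mod_cast this
        · by_contra hle
          push_neg at hle
          have hcast : (n : ℝ) ≤ ((k : ℕ) : ℝ) := by exact_mod_cast (by omega : (n : ℤ) ≤ k)
          have : (n : ℝ) * β ≤ ((k : ℕ) : ℝ) * β := mul_le_mul_of_nonneg_right hcast hβpos.le
          have := Int.floor_le_floor this
          omega
      · rintro ⟨k, ⟨hk1, hk2⟩, rfl⟩
        have han : (n : ℤ) ≤ a := by
          rw [ha_def, Int.le_floor]; push_cast; nlinarith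
        have hk0 : 0 < k := by omega
        have hcastk : ((k.toNat : ℕ) : ℝ) = ((k : ℤ) : ℝ) := by
          exact_mod_cast Int.toNat_of_nonneg hk0.le
        refine ⟨⟨k.toNat, by omega, by rw [hcastk]⟩, ?_, ?_⟩
        · have hkr : (n : ℝ) * α - n < (k : ℝ) := by
            have : ((a : ℝ) - n) + 1 ≤ (k : ℝ) := by exact_mod_cast hk1
            linarith
          have hmul := mul_lt_mul_of_pos_left hkr hβpos
          have hkβgt : (n : ℝ) * α < (k : ℝ) * β := by nlinarith
          have hge : a ≤ ⌊(k : ℝ) * β⌋ := by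
            rw [ha_def]; exact Int.floor_le_floor hkβgt.le
          have hne : a ≠ ⌊(k : ℝ) * β⌋ := by
            rw [ha_def]
            exact beatty_disj hαirr hβirr hα0 hβpos hsum ((n : ℕ) : ℤ) k
              (by exact_mod_cast hn) hk0
          omega
        · have hcast : (k : ℝ) ≤ (n : ℝ) - 1 := by exact_mod_cast hk2
          have hmul : (k : ℝ) * β ≤ ((n : ℝ) - 1) * β :=
            mul_le_mul_of_nonneg_right hcast hβpos.le
          have hfl : (⌊(k : ℝ) * β⌋ : ℝ) ≤ (k : ℝ) * β := Int.floor_le _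
          have : ⌊(k : ℝ) * β⌋ + 1 ≤ b := by
            rw [hb_def, Int.le_floor]; push_cast; nlinarith
          omega
    rw [hfloor2, hSB, Set.ncard_coe_finset,
      Finset.card_image_of_injOn ((floor_mul_strictMono (by linarith : 1 < β)).injective.injOn),
      Int.card_Ioc]
    have ha2n : a < 2 * (n : ℤ) := by
      rw [ha_def, Int.floor_lt]; push_cast; nlinarith
    have han : (n : ℤ) ≤ a := by
      rw [ha_def, Int.le_floor]; push_cast; nlinarith
    omega
end
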